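/- arXiv:2112.03217 — 4 statements merged into one kernel-verified Lean document; each statement's English description precedes it below -/
import Mathlib

section
/- Let d ≥ 1 and fix δ ∈ (0, 3). Then there exist constants c > 0 and b_0 > 0, depending only on d and δ, such that for all b ∈ (0, b_0) and all s ∈ [1/(4d), 3/(4d)]^d, the Dirichlet density evaluated at the shifted point satisfies K_{s/b + 1, (1−‖s‖₁)/b + 1}(s + δ b^{1/2} · 1) ≥ c · b^{−d/2}, where s + δ b^{1/2} · 1 denotes adding δ b^{1/2} to every coordinate of s. -/
open MeasureTheory Filter Topology
open scoped ENNReal BigOperators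

noncomputable section

/-- The d-dimensional simplex `S_d = {s ∈ [0,1]^d : s_1 + ⋯ + s_d ≤ 1}`. -/
def Sd (d : ℕ) : Set (Fin d → ℝ) :=
  {s | (∀ i, 0 ≤ s i ∧ s i ≤ 1) ∧ ∑ i, s i ≤ 1}

/-- The Dirichlet density `K_{u,v}` on `S_d` (0 outside). -/
def dirK (d : ℕ) (u : Fin d → ℝ) (v : ℝ) : (Fin d → ℝ) → ℝ :=
  Set.indicator (Sd d)
    (fun s => Real.Gamma (v + ∑ i, u i) / (Real.Gamma v * ∏ i, Real.Gamma (u i)) *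
      (1 - ∑ i, s i) ^ (v - 1) * ∏ i, (s i) ^ (u i - 1))

/-- The Dirichlet kernel `K_{s/b+1, (1-‖s‖₁)/b+1}` at location `s` with bandwidth `b`. -/
def dirKb (d : ℕ) (b : ℝ) (s : Fin d → ℝ) : (Fin d → ℝ) → ℝ :=
  dirK d (fun i => s i / b + 1) ((1 - ∑ i, s i) / b + 1)

/-- The Dirichlet kernel density estimator based on the sample `X`. -/
def fhat (d n : ℕ) (b : ℝ) (X : Fin n → Fin d → ℝ) (s : Fin d → ℝ) : ℝ :=
  (n : ℝ)⁻¹ * ∑ i, dirKb d b s (X i)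

/-- `m` = the largest integer strictly less than `β` (for `β > 0`). -/
def mOf (β : ℝ) : ℕ := ⌈β⌉₊ - 1

/-- Partial derivative of order `j` in the directions `v` (on the interior of the simplex). -/
def Dpartial (d j : ℕ) (f : (Fin d → ℝ) → ℝ) (v : Fin j → Fin d) (s : Fin d → ℝ) : ℝ :=
  iteratedFDerivWithin ℝ j f (interior (Sd d)) s fun i => Pi.single (v i) 1

/-- The Hölder class `Σ(d, β, L)` of probability densities supported on `S_d`. -/
def holderClass (d : ℕ) (β L : ℝ) : Set ((Fin d → ℝ) → ℝ) :=
  {f | (∀ s, 0 ≤ f s) ∧ (∀ s, s ∉ Sd d → f s = 0) ∧ (∫ s in Sd d, f s) = 1 ∧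
    ContDiffOn ℝ (mOf β) f (interior (Sd d)) ∧
    ∀ v : Fin (mOf β) → Fin d, ∀ s ∈ interior (Sd d), ∀ t ∈ interior (Sd d),
      |Dpartial d (mOf β) f v s - Dpartial d (mOf β) f v t| ≤
        L * (∑ i, |s i - t i|) ^ (β - (mOf β : ℝ))}

/-- `E_f ‖f̂_{n,b} − f‖_p^p`: expectation, under i.i.d. sampling of `X_1, …, X_n` from the
density `f`, of the `p`-th power of the `L^p` distance between `f̂_{n,b}` and `f` on `S_d`. -/
def lpRiskPow (d n : ℕ) (b p : ℝ) (f : (Fin d → ℝ) → ℝ) : ℝ :=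
  ∫ ω : Fin n → Fin d → ℝ,
    (∏ i, f (ω i)) * ∫ s in Sd d, |fhat d n b ω s - f s| ^ p

set_option maxHeartbeats 1600000

namespace DKaux

open Real Finset Nat

/-- `x * log(x/c) ≥ x - c` type convexity fact. -/
lemma glb {x c : ℝ} (hx : 0 < x) (hc : 0 < c) :
    c * Real.log c - c + (x - c) * Real.log c ≤ x * Real.log x - x := by
  have h := Real.one_sub_inv_le_log_of_pos (show 0 < x / c by positivity)
  have hinv : (x / c)⁻¹ = c / x := by rw [inv_div]
  rw [hinv, Real.log_div hx.ne' hc.ne'] at h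
  have h2 : x * (1 - c / x) ≤ x * (Real.log x - Real.log c) :=
    mul_le_mul_of_nonneg_left h hx.le
  have h3 : x * (1 - c / x) = x - c := by field_simp
  nlinarith [h2, h3]

lemma log_one_add_ge {u : ℝ} (hu : 0 ≤ u) : u - u ^ 2 ≤ Real.log (1 + u) := by
  have h1u : (0:ℝ) < 1 + u := by linarith
  have h := Real.one_sub_inv_le_log_of_pos h1u
  have hv : (1 + u) * (1 + u)⁻¹ = 1 := mul_inv_cancel₀ h1u.ne'
  nlinarith [h, hv, inv_nonneg.mpr h1u.le, sq_nonneg u, pow_nonneg hu 3]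

lemma log_one_sub_ge {w : ℝ} (h0 : 0 ≤ w) (h2 : w ≤ 1/2) :
    -w - 2 * w ^ 2 ≤ Real.log (1 - w) := by
  have h1w : (0:ℝ) < 1 - w := by linarith
  have h := Real.one_sub_inv_le_log_of_pos h1w
  have hv : (1 - w) * (1 - w)⁻¹ = 1 := mul_inv_cancel₀ h1w.ne'
  nlinarith [h, hv, inv_nonneg.mpr h1w.le, sq_nonneg w]

/-- log-convexity of Gamma, exponentiated. -/
lemma gamma_interp {p q θ : ℝ} (hp : 0 < p) (hq : 0 < q) (h0 : 0 ≤ θ) (h1 : θ ≤ 1) :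
    Real.Gamma ((1 - θ) * p + θ * q) ≤
      Real.exp ((1 - θ) * Real.log (Real.Gamma p) + θ * Real.log (Real.Gamma q)) := by
  have harg : 0 < (1 - θ) * p + θ * q := by
    rcases eq_or_lt_of_le h1 with rfl | hlt
    · nlinarith
    · nlinarith [mul_nonneg h0 hq.le, mul_pos (by linarith : (0:ℝ) < 1 - θ) hp]
  have h := Real.convexOn_log_Gamma.2 (Set.mem_Ioi.mpr hp) (Set.mem_Ioi.mpr hq)
    (by linarith : (0:ℝ) ≤ 1 - θ) h0 (by ring)
  simp only [smul_eq_mul, Function.comp_apply] at h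
  calc Real.Gamma ((1 - θ) * p + θ * q)
      = Real.exp (Real.log (Real.Gamma ((1 - θ) * p + θ * q))) :=
        (Real.exp_log (Real.Gamma_pos_of_pos harg)).symm
    _ ≤ _ := Real.exp_le_exp.mpr h

/-- Stirling-type function. -/
def stG (x : ℝ) : ℝ := Real.sqrt x * Real.exp (x * Real.log x - x)

lemma stG_pos {x : ℝ} (hx : 0 < x) : 0 < stG x := by
  unfold stG; positivity

lemma stirlingSeq_ge (n : ℕ) : Real.sqrt Real.pi ≤ Stirling.stirlingSeq (n + 1) := by
  have ht : Filter.Tendsto (Stirling.stirlingSeq ∘ Nat.succ) Filter.atTop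
      (nhds (Real.sqrt Real.pi)) :=
    Stirling.tendsto_stirlingSeq_sqrt_pi.comp (Filter.tendsto_add_atTop_nat 1)
  exact Stirling.stirlingSeq'_antitone.le_of_tendsto ht n

lemma stirlingSeq_le (n : ℕ) : Stirling.stirlingSeq (n + 1) ≤ Real.exp 1 / Real.sqrt 2 := by
  have h := Stirling.stirlingSeq'_antitone (Nat.zero_le n)
  simpa [Stirling.stirlingSeq_one] using h

lemma pow_div_exp_eq (n : ℕ) (hn : 1 ≤ n) :
    ((n : ℝ) / Real.exp 1) ^ n = Real.exp ((n : ℝ) * Real.log n - n) := by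
  have hn0 : (0:ℝ) < n := by exact_mod_cast hn
  have hpos : (0:ℝ) < (n : ℝ) / Real.exp 1 := by positivity
  rw [← Real.exp_log (pow_pos hpos n), Real.log_pow,
    Real.log_div hn0.ne' (Real.exp_ne_zero 1), Real.log_exp]
  ring_nf

lemma factorial_bounds (n : ℕ) (hn : 1 ≤ n) :
    Real.sqrt Real.pi * (Real.sqrt 2 * Real.sqrt n * Real.exp ((n:ℝ) * Real.log n - n)) ≤ (n ! : ℝ) ∧
    (n ! : ℝ) ≤ Real.exp 1 * (Real.sqrt n * Real.exp ((n:ℝ) * Real.log n - n)) := by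
  obtain ⟨m, rfl⟩ : ∃ m, n = m + 1 := ⟨n - 1, (Nat.succ_pred_eq_of_pos hn).symm⟩
  have hD : Real.sqrt (2 * (m + 1 : ℕ)) * (((m + 1 : ℕ) : ℝ) / Real.exp 1) ^ (m + 1)
      = Real.sqrt 2 * Real.sqrt (m + 1 : ℕ) * Real.exp (((m + 1 : ℕ) : ℝ) * Real.log (m + 1 : ℕ) - (m + 1 : ℕ)) := by
    rw [Real.sqrt_mul (by norm_num : (0:ℝ) ≤ 2), pow_div_exp_eq (m + 1) (Nat.le_add_left 1 m)]
  have hDpos : 0 < Real.sqrt (2 * (m + 1 : ℕ)) * (((m + 1 : ℕ) : ℝ) / Real.exp 1) ^ (m + 1) := by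
    have : (0:ℝ) < ((m + 1 : ℕ) : ℝ) := by positivity
    positivity
  have hfact : ((m + 1)! : ℝ) = Stirling.stirlingSeq (m + 1) *
      (Real.sqrt (2 * (m + 1 : ℕ)) * (((m + 1 : ℕ) : ℝ) / Real.exp 1) ^ (m + 1)) := by
    rw [Stirling.stirlingSeq, div_mul_cancel₀ _ hDpos.ne']
  constructor
  · rw [hfact, ← hD]
    exact mul_le_mul_of_nonneg_right (stirlingSeq_ge m) hDpos.le
  · rw [hfact]
    have h := mul_le_mul_of_nonneg_right (stirlingSeq_le m) hDpos.le
    refine h.trans (le_of_eq ?_)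
    rw [hD]
    have h2 : Real.sqrt 2 ≠ 0 := by positivity
    field_simp

lemma gamma_upper {x : ℝ} (hx : 1 ≤ x) : Real.Gamma (x + 1) ≤ 6 * stG x := by
  have hx0 : 0 < x := lt_of_lt_of_le one_pos hx
  set n := ⌊x⌋₊ with hn
  have hn1 : 1 ≤ n := Nat.le_floor (by exact_mod_cast hx)
  have hn0 : (0:ℝ) < n := by exact_mod_cast hn1
  have hnx : (n:ℝ) ≤ x := Nat.floor_le hx0.le
  have hxn : x < n + 1 := Nat.lt_floor_add_one x
  set θ := x - (n:ℝ) with hθ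
  have h0θ : 0 ≤ θ := by simp only [hθ]; linarith
  have h1θ : θ ≤ 1 := by simp only [hθ]; linarith
  have hkey := gamma_interp (p := (n:ℝ)+1) (q := (n:ℝ)+2) (by positivity) (by positivity) h0θ h1θ
  have harg : (1-θ)*((n:ℝ)+1) + θ*((n:ℝ)+2) = x + 1 := by simp only [hθ]; ring
  rw [harg] at hkey
  have hΓn1 : Real.Gamma ((n:ℝ)+1) = (n ! : ℝ) := Real.Gamma_nat_eq_factorial n
  have hΓn2 : Real.Gamma ((n:ℝ)+2) = ((n:ℝ)+1) * (n ! : ℝ) := by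
    have h2 : ((n:ℝ)+2) = ((n:ℝ)+1)+1 := by ring
    rw [h2, Real.Gamma_add_one (by positivity), hΓn1]
  have hfpos : (0:ℝ) < (n ! : ℝ) := by exact_mod_cast Nat.factorial_pos n
  have hexp : (1-θ)*Real.log (Real.Gamma ((n:ℝ)+1)) + θ*Real.log (Real.Gamma ((n:ℝ)+2))
      = Real.log (n ! : ℝ) + θ * Real.log ((n:ℝ)+1) := by
    rw [hΓn1, hΓn2, Real.log_mul (by positivity) hfpos.ne']; ring
  rw [hexp] at hkey
  have h1 : Real.exp (Real.log (n ! :ℝ) + θ * Real.log ((n:ℝ)+1)) =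
      (n ! : ℝ) * Real.exp (θ * Real.log ((n:ℝ)+1)) := by
    rw [Real.exp_add, Real.exp_log hfpos]
  have hn1' : (1:ℝ) ≤ (n:ℝ) := by exact_mod_cast hn1
  have hlog21 : Real.log ((n:ℝ)+1) ≤ Real.log 2 + Real.log (n:ℝ) := by
    rw [← Real.log_mul (by norm_num) hn0.ne']
    exact Real.log_le_log (by positivity) (by linarith)
  have hl2 : 0 ≤ Real.log 2 := Real.log_nonneg (by norm_num)
  have hθlog : θ * Real.log ((n:ℝ)+1) ≤ θ * Real.log (n:ℝ) + Real.log 2 := by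
    nlinarith [mul_le_mul_of_nonneg_left hlog21 h0θ]
  have hglb := glb hx0 hn0
  have hsx : 0 < Real.sqrt x * Real.exp (x * Real.log x - x) := by positivity
  calc Real.Gamma (x+1) ≤ (n ! :ℝ) * Real.exp (θ * Real.log ((n:ℝ)+1)) := by
        rw [← h1]; exact hkey
  _ ≤ (Real.exp 1 * (Real.sqrt (n:ℝ) * Real.exp ((n:ℝ)*Real.log (n:ℝ) - (n:ℝ)))) *
        (2 * Real.exp (θ * Real.log (n:ℝ))) := by
      have hf := (factorial_bounds n hn1).2
      have he : Real.exp (θ * Real.log ((n:ℝ)+1)) ≤ 2 * Real.exp (θ * Real.log (n:ℝ)) := by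
        calc Real.exp (θ * Real.log ((n:ℝ)+1)) ≤ Real.exp (θ * Real.log (n:ℝ) + Real.log 2) :=
              Real.exp_le_exp.mpr hθlog
        _ = 2 * Real.exp (θ * Real.log (n:ℝ)) := by
              rw [Real.exp_add, Real.exp_log two_pos]; ring
      exact mul_le_mul hf he (by positivity) (by positivity)
  _ ≤ (Real.exp 1 * (Real.sqrt x * Real.exp ((n:ℝ)*Real.log (n:ℝ) - (n:ℝ)))) *
        (2 * Real.exp (θ * Real.log (n:ℝ))) := by
      have hsq := Real.sqrt_le_sqrt hnx
      gcongr
  _ = 2 * Real.exp 1 * Real.sqrt x *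
        Real.exp (((n:ℝ)*Real.log (n:ℝ) - (n:ℝ)) + θ * Real.log (n:ℝ)) := by
      rw [Real.exp_add]; ring
  _ ≤ 2 * Real.exp 1 * Real.sqrt x * Real.exp (x * Real.log x - x) := by
      have h2 : (n:ℝ)*Real.log (n:ℝ) - (n:ℝ) + θ * Real.log (n:ℝ) ≤ x * Real.log x - x := by
        simp only [hθ]; linarith [hglb]
      gcongr
  _ ≤ 6 * stG x := by
      unfold stG
      nlinarith [Real.exp_one_lt_d9, hsx]

lemma gamma_lower {x : ℝ} (hx : 1 ≤ x) : stG x ≤ Real.Gamma (x + 1) := by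
  have hx0 : 0 < x := lt_of_lt_of_le one_pos hx
  set n := ⌊x⌋₊ with hn
  have hn1 : 1 ≤ n := Nat.le_floor (by exact_mod_cast hx)
  have hn0 : (0:ℝ) < n := by exact_mod_cast hn1
  have hnx : (n:ℝ) ≤ x := Nat.floor_le hx0.le
  have hxn : x < n + 1 := Nat.lt_floor_add_one x
  set α := (n:ℝ) + 1 - x with hα
  have h0α : 0 ≤ α := by simp only [hα]; linarith
  have h1α : α ≤ 1 := by simp only [hα]; linarith
  have hkey := gamma_interp (p := x+1) (q := x+2) (by positivity) (by positivity) h0α h1α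
  have harg : (1-α)*(x+1) + α*(x+2) = (n:ℝ)+2 := by simp only [hα]; ring
  rw [harg] at hkey
  have hΓpos : 0 < Real.Gamma (x+1) := Real.Gamma_pos_of_pos (by positivity)
  have hΓx2 : Real.Gamma (x+2) = (x+1) * Real.Gamma (x+1) := by
    have h2 : x+2 = (x+1)+1 := by ring
    rw [h2, Real.Gamma_add_one (by positivity)]
  have hΓn2 : Real.Gamma ((n:ℝ)+2) = ((n+1)! : ℝ) := by
    have h2 : ((n:ℝ)+2) = ((n+1:ℕ):ℝ)+1 := by push_cast; ring
    rw [h2, Real.Gamma_nat_eq_factorial]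
  have hexp : (1-α)*Real.log (Real.Gamma (x+1)) + α*Real.log (Real.Gamma (x+2))
      = Real.log (Real.Gamma (x+1)) + α * Real.log (x+1) := by
    rw [hΓx2, Real.log_mul (by positivity) hΓpos.ne']; ring
  rw [hexp, hΓn2] at hkey
  have h1 : Real.exp (Real.log (Real.Gamma (x+1)) + α * Real.log (x+1)) =
      Real.Gamma (x+1) * Real.exp (α * Real.log (x+1)) := by
    rw [Real.exp_add, Real.exp_log hΓpos]
  rw [h1] at hkey
  -- hkey : ((n+1)! : ℝ) ≤ Γ(x+1) * exp (α log (x+1))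
  have hfb := (factorial_bounds (n+1) (Nat.le_add_left 1 n)).1
  have hcast : ((n+1:ℕ):ℝ) = (n:ℝ)+1 := by push_cast; ring
  rw [hcast] at hfb
  have hglb := glb (show (0:ℝ) < (n:ℝ)+1 by positivity) hx0
  -- hglb : x log x - x + ((n+1)-x) log x ≤ (n+1) log (n+1) - (n+1)
  have hsqrt : Real.sqrt x ≤ Real.sqrt ((n:ℝ)+1) := Real.sqrt_le_sqrt (by linarith)
  have hstep : Real.sqrt Real.pi * (Real.sqrt 2 * Real.sqrt x *
      (Real.exp (x * Real.log x - x) * Real.exp (α * Real.log x))) ≤ ((n+1)! :ℝ) := by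
    refine le_trans ?_ hfb
    rw [← Real.exp_add]
    have hexple : Real.exp (x * Real.log x - x + α * Real.log x) ≤
        Real.exp (((n:ℝ)+1) * Real.log ((n:ℝ)+1) - ((n:ℝ)+1)) := by
      apply Real.exp_le_exp.mpr
      simp only [hα] at *
      linarith [hglb]
    have hsp : (0:ℝ) ≤ Real.sqrt Real.pi := Real.sqrt_nonneg _
    have hs2 : (0:ℝ) ≤ Real.sqrt 2 := Real.sqrt_nonneg _
    have he : (0:ℝ) ≤ Real.exp (x * Real.log x - x + α * Real.log x) := (Real.exp_pos _).le
    gcongr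
  have hπ2 : 2 ≤ Real.sqrt Real.pi * Real.sqrt 2 := by
    nlinarith [Real.sq_sqrt Real.pi_pos.le, Real.sq_sqrt (show (0:ℝ) ≤ 2 by norm_num),
      Real.sqrt_nonneg Real.pi, Real.sqrt_nonneg 2, Real.pi_gt_three,
      mul_nonneg (Real.sqrt_nonneg Real.pi) (Real.sqrt_nonneg 2)]
  have hlogx1 : Real.log (x+1) ≤ Real.log 2 + Real.log x := by
    rw [← Real.log_mul (by norm_num) hx0.ne']
    exact Real.log_le_log (by positivity) (by linarith)
  have hl2 : 0 ≤ Real.log 2 := Real.log_nonneg (by norm_num)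
  have hαlog : α * Real.log (x+1) ≤ α * Real.log x + Real.log 2 := by
    nlinarith [mul_le_mul_of_nonneg_left hlogx1 h0α]
  have hE : Real.exp (α * Real.log (x+1)) ≤ 2 * Real.exp (α * Real.log x) := by
    calc Real.exp (α * Real.log (x+1)) ≤ Real.exp (α * Real.log x + Real.log 2) :=
          Real.exp_le_exp.mpr hαlog
    _ = 2 * Real.exp (α * Real.log x) := by rw [Real.exp_add, Real.exp_log two_pos]; ring
  have hT : 0 < Real.exp (α * Real.log x) := Real.exp_pos _
  have hfinal : stG x * (2 * Real.exp (α * Real.log x)) ≤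
      Real.Gamma (x+1) * (2 * Real.exp (α * Real.log x)) := by
    unfold stG
    have hchain : Real.Gamma (x+1) * (2 * Real.exp (α * Real.log x)) ≥
        Real.Gamma (x+1) * Real.exp (α * Real.log (x+1)) :=
      mul_le_mul_of_nonneg_left hE hΓpos.le
    have h2 : Real.sqrt x * Real.exp (x * Real.log x - x) * (2 * Real.exp (α * Real.log x)) ≤
        Real.sqrt Real.pi * (Real.sqrt 2 * Real.sqrt x *
        (Real.exp (x * Real.log x - x) * Real.exp (α * Real.log x))) := by
      nlinarith [hπ2, Real.sqrt_nonneg x, (Real.exp_pos (x * Real.log x - x)).le, hT.le,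
        mul_nonneg (Real.sqrt_nonneg x) (mul_nonneg (Real.exp_pos (x * Real.log x - x)).le hT.le)]
    exact le_trans (h2.trans (hstep.trans hkey)) hchain
  exact le_of_mul_le_mul_right hfinal (by positivity)

lemma gamma_shift {x : ℝ} (hx : 0 < x) (k : ℕ) :
    x ^ k * Real.Gamma (x + 1) ≤ Real.Gamma (x + k + 1) := by
  induction k with
  | zero => simp
  | succ k ih =>
    have hpos : 0 < Real.Gamma (x + k + 1) := Real.Gamma_pos_of_pos (by positivity)
    have hcast : ((k+1:ℕ):ℝ) = (k:ℝ) + 1 := by push_cast; ring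
    have h2 : x + ((k:ℝ)+1) + 1 = (x + (k:ℝ) + 1) + 1 := by ring
    have h1 : Real.Gamma (x + ((k:ℝ)+1) + 1) = (x + (k:ℝ) + 1) * Real.Gamma (x + (k:ℝ) + 1) := by
      rw [h2, Real.Gamma_add_one (by positivity)]
    rw [hcast, h1]
    calc x ^ (k+1) * Real.Gamma (x+1) = x * (x ^ k * Real.Gamma (x+1)) := by ring
    _ ≤ x * Real.Gamma (x + k + 1) := mul_le_mul_of_nonneg_left ih hx.le
    _ ≤ (x + (k:ℝ) + 1) * Real.Gamma (x + (k:ℝ) + 1) := by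
        have h3 : (0:ℝ) ≤ (k:ℝ) + 1 := by positivity
        nlinarith [hpos]

lemma div_mono_num {x y b : ℝ} (h : x ≤ y) (hb : 0 < b) : x / b ≤ y / b := by
  rw [div_eq_mul_inv, div_eq_mul_inv]
  exact mul_le_mul_of_nonneg_right h (inv_nonneg.mpr hb.le)

lemma claimB {A k : ℝ} (hA : 1/4 ≤ A) (hk : 0 < k) (hk8 : k ≤ 1/8) :
    -k - 8*k^2 ≤ A * (Real.log (A - k) - Real.log A) := by
  have hApos : (0:ℝ) < A := by linarith
  have hAk : (0:ℝ) < A - k := by linarith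
  set w := k / A with hw
  have hw0 : 0 ≤ w := by positivity
  have hww : A * w = k := by rw [hw]; field_simp
  have hw4 : w ≤ 4 * k := by
    rw [hw, div_le_iff₀ hApos]
    nlinarith
  have hw12 : w ≤ 1/2 := by nlinarith
  have hlg : Real.log (A - k) - Real.log A = Real.log (1 - w) := by
    rw [← Real.log_div hAk.ne' hApos.ne']
    congr 1
    rw [hw]
    field_simp
  rw [hlg]
  have hlow := log_one_sub_ge hw0 hw12
  have hmul := mul_le_mul_of_nonneg_left hlow hApos.le
  have hww2 : A * w^2 = k * w := by
    rw [show A * w^2 = (A*w)*w from by ring, hww]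
  nlinarith [mul_le_mul_of_nonneg_left hw4 hk.le]

lemma claimC {a k D : ℝ} (hak : 1/(4*D) ≤ a) (hD : 0 < D) (hk : 0 < k) :
    k - 4*D*k^2 ≤ a * (Real.log (a + k) - Real.log a) := by
  have ha : 0 < a := lt_of_lt_of_le (by positivity) hak
  set u := k / a with hu
  have hu0 : 0 ≤ u := by positivity
  have hau : a * u = k := by rw [hu]; field_simp
  have hu4 : u ≤ 4 * D * k := by
    have h1 : (1/(4*D)) * u ≤ k := by
      have := mul_le_mul_of_nonneg_right hak hu0
      rw [hau] at this
      exact this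
    have h2 : u = 4*D*((1/(4*D))*u) := by field_simp
    calc u = 4*D*((1/(4*D))*u) := h2
    _ ≤ 4*D*k := mul_le_mul_of_nonneg_left h1 (by positivity)
  have hlg : Real.log (a + k) - Real.log a = Real.log (1 + u) := by
    rw [← Real.log_div (by positivity : (0:ℝ) < a + k).ne' ha.ne']
    congr 1
    rw [hu]
    field_simp
  rw [hlg]
  have hlow := log_one_add_ge hu0
  have hmul := mul_le_mul_of_nonneg_left hlow ha.le
  have hau2 : a * u^2 = k * u := by
    rw [show a * u^2 = (a*u)*u from by ring, hau]
  nlinarith [mul_le_mul_of_nonneg_left hu4 hk.le]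

end DKaux

/-- Lemma 3.4: for fixed `δ ∈ (0,3)` there are `c, b_0 > 0` depending
only on `d` and `δ` such that for all `b ∈ (0,b_0)` and `s ∈ [1/(4d), 3/(4d)]^d`,
`K_{s/b+1,(1-‖s‖₁)/b+1}(s + δ√b ⋅ 1) ≥ c b^{-d/2}`. -/
theorem dirichlet_kernel_shifted_lower_bound (d : ℕ) (hd : 1 ≤ d) (δ : ℝ)
    (hδ : δ ∈ Set.Ioo (0 : ℝ) 3) :
    ∃ c b0 : ℝ, 0 < c ∧ 0 < b0 ∧ ∀ b ∈ Set.Ioo (0 : ℝ) b0,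
      ∀ s : Fin d → ℝ,
        (∀ i, s i ∈ Set.Icc (1 / (4 * (d : ℝ))) (3 / (4 * (d : ℝ)))) →
        c * b ^ (-(d : ℝ) / 2) ≤ dirKb d b s (fun i => s i + δ * Real.sqrt b) := by
  classical
  obtain ⟨hδ0, hδ3⟩ := hδ
  have hd' : (1:ℝ) ≤ (d:ℝ) := by exact_mod_cast hd
  have hd0 : (0:ℝ) < (d:ℝ) := by linarith
  refine ⟨(1/6)^(d+1) * Real.exp (-(12*(d:ℝ)^2*δ^2)),
    min (1/(4*(d:ℝ))) (1/(64*(d:ℝ)^2*δ^2)), by positivity, ?_, ?_⟩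
  · have h1 : (0:ℝ) < 1/(4*(d:ℝ)) := by positivity
    have h2 : (0:ℝ) < 1/(64*(d:ℝ)^2*δ^2) := by
      have := mul_pos (mul_pos (by norm_num : (0:ℝ) < 64) (pow_pos hd0 2)) (pow_pos hδ0 2)
      positivity
    exact lt_min h1 h2
  rintro b ⟨hb, hbb0⟩ s hs
  have hb4d : b < 1/(4*(d:ℝ)) := lt_of_lt_of_le hbb0 (min_le_left _ _)
  have hbδ : b < 1/(64*(d:ℝ)^2*δ^2) := lt_of_lt_of_le hbb0 (min_le_right _ _)
  have hslow : ∀ i, 1/(4*(d:ℝ)) ≤ s i := fun i => (hs i).1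
  have hshigh : ∀ i, s i ≤ 3/(4*(d:ℝ)) := fun i => (hs i).2
  have h34 : 3/(4*(d:ℝ)) ≤ 3/4 := by
    apply div_le_div_of_nonneg_left (by norm_num) (by norm_num) (by linarith)
  have h14 : 1/(4*(d:ℝ)) ≤ 1/4 := by
    apply div_le_div_of_nonneg_left (by norm_num) (by norm_num) (by linarith)
  have hspos : ∀ i, 0 < s i := fun i => lt_of_lt_of_le (by positivity) (hslow i)
  set S := ∑ i, s i with hSdef
  have hSlow : 1/4 ≤ S := by
    have h := Finset.sum_le_sum (fun (i : Fin d) (_ : i ∈ Finset.univ) => hslow i)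
    rw [Finset.sum_const, Finset.card_univ, Fintype.card_fin, nsmul_eq_mul] at h
    have h2 : (d:ℝ) * (1/(4*(d:ℝ))) = 1/4 := by field_simp
    rw [← hSdef] at h
    linarith
  have hShigh : S ≤ 3/4 := by
    have h := Finset.sum_le_sum (fun (i : Fin d) (_ : i ∈ Finset.univ) => hshigh i)
    rw [Finset.sum_const, Finset.card_univ, Fintype.card_fin, nsmul_eq_mul] at h
    have h2 : (d:ℝ) * (3/(4*(d:ℝ))) = 3/4 := by field_simp
    rw [← hSdef] at h
    linarith
  set ε := δ * Real.sqrt b with hεdef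
  have hε : 0 < ε := mul_pos hδ0 (Real.sqrt_pos.mpr hb)
  have hε2 : ε^2 = δ^2 * b := by
    rw [hεdef, mul_pow, Real.sq_sqrt hb.le]
  have hdε : (d:ℝ) * ε ≤ 1/8 := by
    have h1 : ((d:ℝ)*ε)^2 < 1/64 := by
      have h2 : ((d:ℝ)*ε)^2 = (d:ℝ)^2*δ^2*b := by rw [mul_pow, hε2]; ring
      rw [h2]
      calc (d:ℝ)^2*δ^2*b < (d:ℝ)^2*δ^2*(1/(64*(d:ℝ)^2*δ^2)) :=
            mul_lt_mul_of_pos_left hbδ (mul_pos (pow_pos hd0 2) (pow_pos hδ0 2))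
      _ = 1/64 := by field_simp [hd0.ne', hδ0.ne']
    nlinarith [mul_pos hd0 hε]
  have hεd : ε ≤ (d:ℝ) * ε := by
    nlinarith [mul_nonneg (by linarith : (0:ℝ) ≤ (d:ℝ) - 1) hε.le]
  have hsum_t : ∑ i, (s i + ε) = S + (d:ℝ)*ε := by
    rw [Finset.sum_add_distrib, Finset.sum_const, Finset.card_univ, Fintype.card_fin,
      nsmul_eq_mul, ← hSdef]
  have ht : (fun i => s i + ε) ∈ Sd d := by
    refine ⟨fun i => ⟨?_, ?_⟩, ?_⟩
    · show 0 ≤ s i + ε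
      linarith [hspos i]
    · show s i + ε ≤ 1
      have := hshigh i
      linarith [hεd, hdε]
    · show ∑ i, (s i + ε) ≤ 1
      rw [hsum_t]
      linarith [hdε]
  unfold dirKb dirK
  rw [Set.indicator_of_mem ht]
  simp only [add_sub_cancel_right, ← hSdef]
  rw [hsum_t]
  -- basic positivity facts
  have hb1 : b ≤ 1 := by nlinarith [h14]
  have hy1 : (1:ℝ) ≤ (1-S)/b := (one_le_div hb).mpr (by linarith)
  have hx1 : ∀ i, (1:ℝ) ≤ s i / b := fun i => (one_le_div hb).mpr (by linarith [hslow i])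
  have hN1 : (1:ℝ) ≤ 1/b := (one_le_div hb).mpr hb1
  have hy0 : (0:ℝ) < (1-S)/b := lt_of_lt_of_le one_pos hy1
  have hx0 : ∀ i, (0:ℝ) < s i / b := fun i => lt_of_lt_of_le one_pos (hx1 i)
  have hN0 : (0:ℝ) < 1/b := lt_of_lt_of_le one_pos hN1
  -- Gamma argument
  have hargΓ : (1-S)/b + 1 + ∑ i, (s i / b + 1) = 1/b + (d:ℝ) + 1 := by
    rw [Finset.sum_add_distrib, Finset.sum_const, Finset.card_univ, Fintype.card_fin,
      nsmul_eq_mul, mul_one, ← Finset.sum_div, ← hSdef]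
    have h : (1-S)/b + S/b = 1/b := by rw [← add_div]; ring_nf
    linarith
  rw [hargΓ]
  -- numerator lower bound
  have hnum : (1/b)^d * DKaux.stG (1/b) ≤ Real.Gamma (1/b + (d:ℝ) + 1) := by
    have h1 := DKaux.gamma_lower hN1
    have h2 := mul_le_mul_of_nonneg_left h1 (pow_nonneg hN0.le d)
    exact h2.trans (DKaux.gamma_shift hN0 d)
  have hnumpos : 0 < Real.Gamma (1/b + (d:ℝ) + 1) :=
    Real.Gamma_pos_of_pos (by linarith)
  -- denominator
  have hstGypos : 0 < DKaux.stG ((1-S)/b) := DKaux.stG_pos hy0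
  have hstGxpos : 0 < ∏ i, DKaux.stG (s i / b) :=
    Finset.prod_pos fun i _ => DKaux.stG_pos (hx0 i)
  have hdenpos : 0 < Real.Gamma ((1-S)/b + 1) * ∏ i, Real.Gamma (s i / b + 1) := by
    apply mul_pos (Real.Gamma_pos_of_pos (by linarith))
    exact Finset.prod_pos fun i _ => Real.Gamma_pos_of_pos (by linarith [hx0 i])
  have hden : Real.Gamma ((1-S)/b + 1) * ∏ i, Real.Gamma (s i / b + 1) ≤
      6^(d+1) * (DKaux.stG ((1-S)/b) * ∏ i, DKaux.stG (s i / b)) := by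
    have h1 : Real.Gamma ((1-S)/b + 1) ≤ 6 * DKaux.stG ((1-S)/b) := DKaux.gamma_upper hy1
    have h2 : ∏ i, Real.Gamma (s i / b + 1) ≤ ∏ i, (6 * DKaux.stG (s i / b)) :=
      Finset.prod_le_prod
        (fun i _ => (Real.Gamma_pos_of_pos (by linarith [hx0 i] : (0:ℝ) < s i / b + 1)).le)
        (fun i _ => DKaux.gamma_upper (hx1 i))
    have h3 : ∏ i, (6 * DKaux.stG (s i / b)) = 6^d * ∏ i, DKaux.stG (s i / b) := by
      rw [Finset.prod_mul_distrib, Finset.prod_const, Finset.card_univ, Fintype.card_fin]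
    calc Real.Gamma ((1-S)/b + 1) * ∏ i, Real.Gamma (s i / b + 1)
        ≤ (6 * DKaux.stG ((1-S)/b)) * (6^d * ∏ i, DKaux.stG (s i / b)) := by
          refine mul_le_mul h1 (h2.trans h3.le)
            (Finset.prod_pos fun i _ =>
              Real.Gamma_pos_of_pos (by linarith [hx0 i] : (0:ℝ) < s i / b + 1)).le
            (by positivity)
    _ = 6^(d+1) * (DKaux.stG ((1-S)/b) * ∏ i, DKaux.stG (s i / b)) := by ring
  have hD : (0:ℝ) < 6^(d+1) * (DKaux.stG ((1-S)/b) * ∏ i, DKaux.stG (s i / b)) :=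
    mul_pos (pow_pos (by norm_num) (d+1)) (mul_pos hstGypos hstGxpos)
  have hratio : (1/b)^d * DKaux.stG (1/b) /
      (6^(d+1) * (DKaux.stG ((1-S)/b) * ∏ i, DKaux.stG (s i / b))) ≤
      Real.Gamma (1/b + (d:ℝ) + 1) /
      (Real.Gamma ((1-S)/b + 1) * ∏ i, Real.Gamma (s i / b + 1)) :=
    div_le_div₀ hnumpos.le hnum hdenpos hden
  -- rpow to exp
  have h1Sd : (0:ℝ) < 1 - S - (d:ℝ)*ε := by linarith [hdε]
  have hpow1 : (1 - (S + (d:ℝ)*ε)) ^ ((1-S)/b) =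
      Real.exp ((1-S)/b * Real.log (1 - S - (d:ℝ)*ε)) := by
    rw [show (1 - (S + (d:ℝ)*ε)) = 1 - S - (d:ℝ)*ε by ring,
      Real.rpow_def_of_pos h1Sd, mul_comm]
  have hpow2 : ∏ i, (s i + ε) ^ (s i / b) =
      Real.exp (∑ i, s i / b * Real.log (s i + ε)) := by
    rw [Real.exp_sum]
    exact Finset.prod_congr rfl fun i _ => by
      rw [Real.rpow_def_of_pos (by linarith [hspos i, hε]), mul_comm]
  rw [hpow1, hpow2]
  -- reduce to product inequality
  have hmono := mul_le_mul_of_nonneg_right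
    (mul_le_mul_of_nonneg_right hratio
      (Real.exp_pos ((1-S)/b * Real.log (1 - S - (d:ℝ)*ε))).le)
    (Real.exp_pos (∑ i, s i / b * Real.log (s i + ε))).le
  refine le_trans ?_ hmono
  rw [div_mul_eq_mul_div, div_mul_eq_mul_div, le_div_iff₀ hD]
  -- rewrite b-power
  have hbpow : b ^ (-(d:ℝ)/2) = Real.sqrt (1/b) ^ d := by
    have h1 : (-(d:ℝ)/2) = (-(1/2) : ℝ) * ((d:ℕ):ℝ) := by push_cast; ring
    rw [h1, Real.rpow_mul hb.le, Real.rpow_natCast]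
    congr 1
    rw [Real.rpow_neg hb.le, ← Real.sqrt_eq_rpow, ← Real.sqrt_inv, one_div]
  rw [hbpow]
  unfold DKaux.stG
  rw [Finset.prod_mul_distrib, ← Real.exp_sum]
  have h66 : (1/6:ℝ)^(d+1) * 6^(d+1) = 1 := by
    rw [one_div, inv_pow, inv_mul_cancel₀ (by positivity)]
  have hA4 : (1:ℝ)/4 ≤ 1 - S := by linarith
  -- exponent inequality
  have hEline : -(12*(d:ℝ)^2*δ^2) +
      (((1-S)/b * Real.log ((1-S)/b) - (1-S)/b) +
        ∑ i, (s i / b * Real.log (s i / b) - s i / b)) ≤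
      (1/b * Real.log (1/b) - 1/b) +
      ((1-S)/b * Real.log (1 - S - (d:ℝ)*ε) + ∑ i, s i / b * Real.log (s i + ε)) := by
    have hlogdiv : ∀ a : ℝ, 0 < a → Real.log (a / b) = Real.log a + Real.log (1/b) := by
      intro a ha
      rw [div_eq_mul_one_div, Real.log_mul ha.ne' hN0.ne']
    have h_sumg : ∑ i, (s i / b * Real.log (s i / b) - s i / b) =
        ((∑ i, s i * Real.log (s i)) + S * Real.log (1/b) - S)/b := by
      have e0 : ∀ i : Fin d, s i / b * Real.log (s i / b) - s i / b =
          (s i * Real.log (s i) + s i * Real.log (1/b) - s i)/b := by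
        intro i
        rw [hlogdiv (s i) (hspos i)]
        field_simp
      rw [Finset.sum_congr rfl (fun i _ => e0 i), ← Finset.sum_div]
      congr 1
      rw [Finset.sum_sub_distrib, Finset.sum_add_distrib, ← Finset.sum_mul, ← hSdef]
    have h_L2 : ∑ i, s i / b * Real.log (s i + ε) =
        (∑ i, s i * Real.log (s i + ε))/b := by
      calc ∑ i, s i / b * Real.log (s i + ε)
          = ∑ i, (s i * Real.log (s i + ε))/b :=
            Finset.sum_congr rfl fun i _ => by ring
      _ = (∑ i, s i * Real.log (s i + ε))/b := by rw [← Finset.sum_div]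
    have hEeq : (1/b * Real.log (1/b) - 1/b) +
        ((1-S)/b * Real.log (1 - S - (d:ℝ)*ε) + ∑ i, s i / b * Real.log (s i + ε)) -
        (((1-S)/b * Real.log ((1-S)/b) - (1-S)/b) +
          ∑ i, (s i / b * Real.log (s i / b) - s i / b)) =
        ((1-S)*(Real.log (1 - S - (d:ℝ)*ε) - Real.log (1-S)) +
          ((∑ i, s i * Real.log (s i + ε)) - ∑ i, s i * Real.log (s i)))/b := by
      rw [h_sumg, h_L2, hlogdiv (1-S) (by linarith)]
      field_simp
      ring
    have hB : -((d:ℝ)*ε) - 8*((d:ℝ)*ε)^2 ≤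
        (1-S)*(Real.log (1 - S - (d:ℝ)*ε) - Real.log (1-S)) := by
      have h := DKaux.claimB hA4 (mul_pos hd0 hε) hdε
      have harg : (1-S) - (d:ℝ)*ε = 1 - S - (d:ℝ)*ε := by ring
      rw [harg] at h
      exact h
    have hC : ∀ i : Fin d, ε - 4*(d:ℝ)*ε^2 ≤
        s i * (Real.log (s i + ε) - Real.log (s i)) :=
      fun i => DKaux.claimC (hslow i) hd0 hε
    have hsumC : (d:ℝ)*ε - 4*(d:ℝ)^2*ε^2 ≤
        (∑ i, s i * Real.log (s i + ε)) - ∑ i, s i * Real.log (s i) := by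
      rw [← Finset.sum_sub_distrib]
      have h := Finset.sum_le_sum (fun (i : Fin d) (_ : i ∈ Finset.univ) => hC i)
      rw [Finset.sum_const, Finset.card_univ, Fintype.card_fin, nsmul_eq_mul] at h
      have h2 : ∑ i, s i * (Real.log (s i + ε) - Real.log (s i)) =
          ∑ i, (s i * Real.log (s i + ε) - s i * Real.log (s i)) :=
        Finset.sum_congr rfl fun i _ => by ring
      rw [h2] at h
      refine le_trans (le_of_eq (by ring)) h
    have hnum2 : -(12*(d:ℝ)^2*ε^2) ≤
        (1-S)*(Real.log (1 - S - (d:ℝ)*ε) - Real.log (1-S)) +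
        ((∑ i, s i * Real.log (s i + ε)) - ∑ i, s i * Real.log (s i)) := by
      nlinarith [hB, hsumC]
    have hdiveq : -(12*(d:ℝ)^2*δ^2) = -(12*(d:ℝ)^2*ε^2)/b := by
      rw [hε2]
      field_simp
    have hdiv : -(12*(d:ℝ)^2*δ^2) ≤
        ((1-S)*(Real.log (1 - S - (d:ℝ)*ε) - Real.log (1-S)) +
          ((∑ i, s i * Real.log (s i + ε)) - ∑ i, s i * Real.log (s i)))/b := by
      rw [hdiveq]
      exact DKaux.div_mono_num hnum2 hb
    linarith only [hdiv, hEeq]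
  -- factor comparison
  have hsqN2 : Real.sqrt (1/b) ^ 2 = 1/b := Real.sq_sqrt hN0.le
  have hfactor1 : Real.sqrt (1/b) ^ d *
      (Real.sqrt ((1-S)/b) * ∏ i, Real.sqrt (s i / b)) ≤ (1/b)^d * Real.sqrt (1/b) := by
    have hyN : Real.sqrt ((1-S)/b) ≤ Real.sqrt (1/b) :=
      Real.sqrt_le_sqrt (DKaux.div_mono_num (by linarith) hb)
    have hprod : ∏ i, Real.sqrt (s i / b) ≤ Real.sqrt (1/b) ^ d := by
      rw [show Real.sqrt (1/b) ^ d = ∏ _i : Fin d, Real.sqrt (1/b) from by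
        rw [Finset.prod_const, Finset.card_univ, Fintype.card_fin]]
      exact Finset.prod_le_prod (fun i _ => Real.sqrt_nonneg _)
        (fun i _ => Real.sqrt_le_sqrt (DKaux.div_mono_num (by linarith [hshigh i, h34]) hb))
    calc Real.sqrt (1/b) ^ d * (Real.sqrt ((1-S)/b) * ∏ i, Real.sqrt (s i / b))
        ≤ Real.sqrt (1/b) ^ d * (Real.sqrt (1/b) * Real.sqrt (1/b) ^ d) := by
          refine mul_le_mul_of_nonneg_left ?_ (by positivity)
          exact mul_le_mul hyN hprod (Finset.prod_nonneg fun i _ => Real.sqrt_nonneg _)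
            (Real.sqrt_nonneg _)
    _ = (1/b)^d * Real.sqrt (1/b) := by
        rw [show Real.sqrt (1/b) ^ d * (Real.sqrt (1/b) * Real.sqrt (1/b) ^ d) =
          (Real.sqrt (1/b) ^ 2)^d * Real.sqrt (1/b) from by ring, hsqN2]
  calc (1/6:ℝ)^(d+1) * Real.exp (-(12*(d:ℝ)^2*δ^2)) * Real.sqrt (1/b) ^ d *
        (6^(d+1) * (Real.sqrt ((1-S)/b) *
            Real.exp ((1-S)/b * Real.log ((1-S)/b) - (1-S)/b) *
          ((∏ i, Real.sqrt (s i / b)) *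
            Real.exp (∑ i, (s i / b * Real.log (s i / b) - s i / b)))))
      = (Real.sqrt (1/b) ^ d * (Real.sqrt ((1-S)/b) * ∏ i, Real.sqrt (s i / b))) *
        Real.exp (-(12*(d:ℝ)^2*δ^2) +
          (((1-S)/b * Real.log ((1-S)/b) - (1-S)/b) +
            ∑ i, (s i / b * Real.log (s i / b) - s i / b))) := by
        rw [Real.exp_add, Real.exp_add]
        linear_combination (Real.exp (-(12*(d:ℝ)^2*δ^2)) * Real.sqrt (1/b) ^ d *
          Real.sqrt ((1-S)/b) * Real.exp ((1-S)/b * Real.log ((1-S)/b) - (1-S)/b) *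
          (∏ i, Real.sqrt (s i / b)) *
          Real.exp (∑ i, (s i / b * Real.log (s i / b) - s i / b))) * h66
  _ ≤ ((1/b)^d * Real.sqrt (1/b)) *
        Real.exp ((1/b * Real.log (1/b) - 1/b) +
          ((1-S)/b * Real.log (1 - S - (d:ℝ)*ε) + ∑ i, s i / b * Real.log (s i + ε))) :=
        mul_le_mul hfactor1 (Real.exp_le_exp.mpr hEline) (Real.exp_pos _).le
          (mul_nonneg (pow_nonneg hN0.le d) (Real.sqrt_nonneg _))
  _ = (1/b)^d * (Real.sqrt (1/b) * Real.exp (1/b * Real.log (1/b) - 1/b)) *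
        Real.exp ((1-S)/b * Real.log (1 - S - (d:ℝ)*ε)) *
        Real.exp (∑ i, s i / b * Real.log (s i + ε)) := by
        rw [Real.exp_add, Real.exp_add]
        ring
end
end

section
/- Let d ≥ 1, β > 0 and L > 0, and let m be the largest integer strictly less than β. Then there exists a constant M = M(d, β, L) such that every f ∈ Σ(d, β, L) satisfies max over multi-indices γ with |γ| ≤ m of sup_{s ∈ Int(S_d)} |D^γ f(s)| ≤ M; in particular all partial derivatives of order at most m of members of Σ(d, β, L) are uniformly bounded on the interior of the simplex. -/
open MeasureTheory Filter Topology
open scoped ENNReal BigOperators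

noncomputable section

namespace HolderAux

open MeasureTheory Filter Topology Set

variable {d : ℕ} {f : (Fin d → ℝ) → ℝ} {n : ℕ} {h : ℝ} {β L : ℝ}


/-- the open "interior-like" set -/
def V (d : ℕ) : Set (Fin d → ℝ) := {s | (∀ i, 0 < s i) ∧ ∑ i, s i < 1}

lemma isOpen_V : IsOpen (V d) := by
  have h1 : ∀ i : Fin d, IsOpen {s : Fin d → ℝ | 0 < s i} := fun i =>
    isOpen_lt continuous_const (continuous_apply i)
  have h2 : IsOpen {s : Fin d → ℝ | ∑ i, s i < 1} :=
    isOpen_lt (by continuity) continuous_const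
  have : V d = (⋂ i, {s : Fin d → ℝ | 0 < s i}) ∩ {s | ∑ i, s i < 1} := by
    ext s; simp [V, Set.mem_iInter]
  rw [this]
  exact ((isOpen_iInter_of_finite h1).inter h2)

lemma V_subset_Sd : V d ⊆ Sd d := by
  intro s hs
  obtain ⟨h1, h2⟩ := hs
  refine ⟨fun i => ⟨(h1 i).le, ?_⟩, h2.le⟩
  calc s i ≤ ∑ j, s j := Finset.single_le_sum (fun j _ => (h1 j).le) (Finset.mem_univ i)
    _ ≤ 1 := h2.le

lemma V_subset_int : V d ⊆ interior (Sd d) :=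
  isOpen_V.subset_interior_iff.mpr V_subset_Sd

lemma convex_Sd : Convex ℝ (Sd d) := by
  have : Sd d = (Set.pi Set.univ fun _ : Fin d => Set.Icc (0:ℝ) 1) ∩
      {s | ∑ i, s i ≤ 1} := by
    ext s
    simp only [Sd, Set.mem_inter_iff, Set.mem_setOf_eq, Set.mem_pi, Set.mem_univ,
      Set.mem_Icc]
    exact ⟨fun ⟨h1, h2⟩ => ⟨fun i _ => h1 i, h2⟩, fun ⟨h1, h2⟩ => ⟨fun i => h1 i trivial, h2⟩⟩
  rw [this]
  refine (convex_pi fun i _ => convex_Icc 0 1).inter ?_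
  have : IsLinearMap ℝ (fun s : Fin d → ℝ => ∑ i, s i) := by
    constructor
    · intro x y; simp [Finset.sum_add_distrib]
    · intro c x; simp [Finset.mul_sum]
  exact convex_halfSpace_le this 1

lemma convex_int : Convex ℝ (interior (Sd d)) := convex_Sd.interior

lemma mem_Sd_of_int {s : Fin d → ℝ} (hs : s ∈ interior (Sd d)) : s ∈ Sd d :=
  interior_subset hs

lemma sum_abs_sub_le {s t : Fin d → ℝ} (hs : s ∈ Sd d) (ht : t ∈ Sd d) :
    ∑ i, |s i - t i| ≤ 2 := by
  calc ∑ i, |s i - t i| ≤ ∑ i, (s i + t i) := by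
        refine Finset.sum_le_sum fun i _ => ?_
        rw [abs_sub_le_iff]
        constructor <;> nlinarith [(hs.1 i).1, (ht.1 i).1]
    _ = ∑ i, s i + ∑ i, t i := Finset.sum_add_distrib
    _ ≤ 2 := by linarith [hs.2, ht.2]

def DL (f : (Fin d → ℝ) → ℝ) : List (Fin d) → (Fin d → ℝ) → ℝ
  | [] => f
  | i :: l => fun x => fderiv ℝ (DL f l) x (Pi.single i 1)

lemma hasFDerivAt_Dpartial (hf : ContDiffOn ℝ (n : ℕ∞) f (interior (Sd d)))
    {j : ℕ} (hj : j < n) (v : Fin j → Fin d) {x : Fin d → ℝ} (hx : x ∈ interior (Sd d)) :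
    ∃ Φ : (Fin d → ℝ) →L[ℝ] ℝ, HasFDerivAt (Dpartial d j f v) Φ x ∧
      ∀ i, Φ (Pi.single i 1) = Dpartial d (j + 1) f (Fin.cons i v) x := by
  set U := interior (Sd d)
  set F := iteratedFDerivWithin ℝ j f U with hF
  have hdiff : DifferentiableOn ℝ F U :=
    hf.differentiableOn_iteratedFDerivWithin (by exact_mod_cast hj)
      isOpen_interior.uniqueDiffOn
  have hFx : HasFDerivAt F (fderiv ℝ F x) x :=
    (((hdiff x hx).differentiableAt (isOpen_interior.mem_nhds hx))).hasFDerivAt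
  set w : Fin j → (Fin d → ℝ) := fun i => Pi.single (v i) 1 with hw
  set A := ContinuousMultilinearMap.apply ℝ (fun _ : Fin j => (Fin d → ℝ)) ℝ w with hA
  refine ⟨A.comp (fderiv ℝ F x), ?_, ?_⟩
  · exact A.hasFDerivAt.comp x hFx
  · intro i
    have h1 : fderivWithin ℝ F U x = fderiv ℝ F x := fderivWithin_of_isOpen isOpen_interior hx
    have h2 := iteratedFDerivWithin_succ_apply_left
      (𝕜 := ℝ) (f := f) (s := U) (x := x) (n := j)
      (fun k => (Pi.single ((Fin.cons i v : Fin (j+1) → Fin d) k) 1 : Fin d → ℝ))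
    rw [h1] at h2
    have h4 : Fin.tail (fun k : Fin (j+1) => (Pi.single ((Fin.cons i v : Fin (j+1) → Fin d) k) 1 : Fin d → ℝ)) = w := by
      funext k; simp [Fin.tail, hw]
    simp only [Fin.cons_zero] at h2
    rw [h4] at h2
    exact h2.symm

lemma bridge (hf : ContDiffOn ℝ (n : ℕ∞) f (interior (Sd d))) :
    ∀ j : ℕ, j ≤ n → ∀ v : Fin j → Fin d, ∀ x ∈ interior (Sd d),
      Dpartial d j f v x = DL f (List.ofFn v) x := by
  intro j
  induction j with
  | zero =>
    intro _ v x hx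
    simp [Dpartial, DL, iteratedFDerivWithin_zero_apply, List.ofFn_zero]
  | succ j IH =>
    intro hj v x hx
    set U := interior (Sd d)
    set F := iteratedFDerivWithin ℝ j f U with hF
    have hj' : j < n := lt_of_lt_of_le (Nat.lt_succ_self j) hj
    have hdiff : DifferentiableOn ℝ F U :=
      hf.differentiableOn_iteratedFDerivWithin (by exact_mod_cast hj')
        isOpen_interior.uniqueDiffOn
    have hFx : DifferentiableAt ℝ F x :=
      (hdiff x hx).differentiableAt (isOpen_interior.mem_nhds hx)
    have h1 : fderivWithin ℝ F U x = fderiv ℝ F x := fderivWithin_of_isOpen isOpen_interior hx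
    -- LHS
    have hL : Dpartial d (j+1) f v x
        = (fderiv ℝ F x) (Pi.single (v 0) 1) (fun k => Pi.single (v k.succ) 1) := by
      have h2 := iteratedFDerivWithin_succ_apply_left
        (𝕜 := ℝ) (f := f) (s := U) (x := x) (n := j)
        (fun k => Pi.single (v k) 1)
      rw [h1] at h2
      exact h2
    -- RHS
    have hofn : List.ofFn v = v 0 :: List.ofFn (Fin.tail v) := by
      rw [List.ofFn_succ]; rfl
    rw [hL, hofn]
    show _ = fderiv ℝ (DL f (List.ofFn (Fin.tail v))) x (Pi.single (v 0) 1)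
    -- DL f (ofFn (tail v)) agrees with Dpartial d j f (tail v) on U
    have heq : ∀ y ∈ U, DL f (List.ofFn (Fin.tail v)) y = Dpartial d j f (Fin.tail v) y :=
      fun y hy => (IH (le_of_lt hj') (Fin.tail v) y hy).symm
    have hev : DL f (List.ofFn (Fin.tail v)) =ᶠ[nhds x] Dpartial d j f (Fin.tail v) := by
      filter_upwards [isOpen_interior.mem_nhds hx] with y hy using heq y hy
    rw [Filter.EventuallyEq.fderiv_eq hev]
    -- fderiv of evaluation of F
    set w : Fin j → (Fin d → ℝ) := fun i => Pi.single (Fin.tail v i) 1 with hw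
    set A := ContinuousMultilinearMap.apply ℝ (fun _ : Fin j => (Fin d → ℝ)) ℝ w with hA
    have hcomp : HasFDerivAt (Dpartial d j f (Fin.tail v)) (A.comp (fderiv ℝ F x)) x :=
      A.hasFDerivAt.comp x hFx.hasFDerivAt
    rw [hcomp.fderiv]
    rfl

lemma hasFDerivAt_DL (hf : ContDiffOn ℝ (n : ℕ∞) f (interior (Sd d)))
    {l : List (Fin d)} (hl : l.length < n) {x : Fin d → ℝ} (hx : x ∈ interior (Sd d)) :
    ∃ Φ : (Fin d → ℝ) →L[ℝ] ℝ, HasFDerivAt (DL f l) Φ x ∧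
      ∀ i, Φ (Pi.single i 1) = DL f (i :: l) x := by
  obtain ⟨Φ, hΦ, hΦi⟩ := hasFDerivAt_Dpartial hf hl l.get hx
  have hev : DL f l =ᶠ[nhds x] Dpartial d l.length f l.get := by
    filter_upwards [isOpen_interior.mem_nhds hx] with y hy
    have := bridge hf l.length (le_of_lt hl) l.get y hy
    rw [List.ofFn_get] at this
    exact this.symm
  refine ⟨Φ, ?_, ?_⟩
  · exact (Filter.EventuallyEq.hasFDerivAt_iff hev).mpr hΦ
  · intro i
    rw [hΦi i, bridge hf (l.length + 1) hl (Fin.cons i l.get) x hx]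
    have : List.ofFn (Fin.cons i l.get) = i :: List.ofFn l.get := by
      rw [List.ofFn_succ]
      congr 1
    rw [this, List.ofFn_get]

/-- mixed finite differences -/
def md (h : ℝ) (g : (Fin d → ℝ) → ℝ) : List (Fin d) → (Fin d → ℝ) → ℝ
  | [], x => g x
  | i :: l, x => md h g l (x + Pi.single i h) - md h g l x

/-- budget sets -/
def P (d : ℕ) (h : ℝ) (k : ℕ) : Set (Fin d → ℝ) :=
  {x | (∀ i, 0 < x i) ∧ ∑ i, x i < 1 - k * h}

lemma P_zero : P d h 0 = V d := by
  ext x; simp [P, V]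

lemma P_antitone (hh : 0 < h) {k k' : ℕ} (hk : k ≤ k') : P d h k' ⊆ P d h k := by
  intro x hx
  refine ⟨hx.1, lt_of_lt_of_le hx.2 ?_⟩
  have : (k : ℝ) ≤ k' := by exact_mod_cast hk
  nlinarith

lemma sum_add_single (x : Fin d → ℝ) (i : Fin d) (t : ℝ) :
    ∑ j, (x + Pi.single i t : Fin d → ℝ) j = (∑ j, x j) + t := by
  simp [Finset.sum_add_distrib, Pi.single_apply]

lemma P_seg (hh : 0 < h) {k : ℕ} {x : Fin d → ℝ} (hx : x ∈ P d h (k + 1)) (i : Fin d)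
    {t : ℝ} (ht0 : 0 ≤ t) (ht1 : t ≤ h) : x + Pi.single i t ∈ P d h k := by
  constructor
  · intro j
    rcases eq_or_ne j i with rfl | hji
    · have := hx.1 j; simp only [Pi.add_apply, Pi.single_eq_same]; linarith
    · have := hx.1 j; simpa [Pi.single_apply, hji] using this
  · rw [sum_add_single x i t]
    have := hx.2
    push_cast at this ⊢
    nlinarith

lemma P_shift (hh : 0 < h) {k : ℕ} {x : Fin d → ℝ} (hx : x ∈ P d h (k + 1)) (i : Fin d) :
    x + Pi.single i h ∈ P d h k := P_seg hh hx i hh.le le_rfl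

/-- derivative structure of mixed differences -/
lemma md_hasFDerivAt (hf : ContDiffOn ℝ (n : ℕ∞) f (interior (Sd d))) (hh : 0 < h) :
    ∀ (l₂ l₁ : List (Fin d)), l₂.length + l₁.length + 1 ≤ n →
    ∀ y ∈ P d h l₂.length,
    ∃ Φ : (Fin d → ℝ) →L[ℝ] ℝ, HasFDerivAt (md h (DL f l₁) l₂) Φ y ∧
      ∀ i, Φ (Pi.single i 1) = md h (DL f (i :: l₁)) l₂ y := by
  intro l₂
  induction l₂ with
  | nil =>
    intro l₁ hlen y hy
    simp only [List.length_nil] at hy hlen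
    have hy' : y ∈ interior (Sd d) := V_subset_int (by rwa [P_zero] at hy)
    have hl : l₁.length < n := by omega
    exact hasFDerivAt_DL hf hl hy'
  | cons a l₂ IH =>
    intro l₁ hlen y hy
    simp only [List.length_cons] at hlen hy
    have hlen' : l₂.length + l₁.length + 1 ≤ n := by omega
    have hy1 : y ∈ P d h l₂.length := P_antitone hh (Nat.le_succ _) hy
    have hy2 : y + Pi.single a h ∈ P d h l₂.length := P_shift hh hy a
    obtain ⟨Φ₁, hΦ₁, hΦ₁i⟩ := IH l₁ hlen' y hy1
    obtain ⟨Φ₂, hΦ₂, hΦ₂i⟩ := IH l₁ hlen' _ hy2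
    have htrans : HasFDerivAt (fun z => md h (DL f l₁) l₂ (z + Pi.single a h)) Φ₂ y := by
      have hid : HasFDerivAt (fun z : Fin d → ℝ => z + Pi.single a h)
          (ContinuousLinearMap.id ℝ (Fin d → ℝ)) y := (hasFDerivAt_id y).add_const _
      have := hΦ₂.comp y hid
      exact this
    refine ⟨Φ₂ - Φ₁, ?_, ?_⟩
    · exact htrans.sub hΦ₁
    · intro i
      simp [md, hΦ₁i i, hΦ₂i i]

/-- mean value theorem for mixed differences -/
lemma mvt_md (hf : ContDiffOn ℝ (n : ℕ∞) f (interior (Sd d))) (hh : 0 < h) :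
    ∀ (l₂ l₁ : List (Fin d)), l₂.length + l₁.length ≤ n →
    ∀ x ∈ P d h l₂.length,
    ∃ ξ ∈ V d, md h (DL f l₁) l₂ x = h ^ l₂.length * DL f (l₂.reverse ++ l₁) ξ := by
  intro l₂
  induction l₂ with
  | nil =>
    intro l₁ _ x hx
    simp only [List.length_nil] at hx
    refine ⟨x, by rwa [P_zero] at hx, by simp [md]⟩
  | cons a l₂ IH =>
    intro l₁ hlen x hx
    simp only [List.length_cons] at hlen hx
    have hlen1 : l₂.length + l₁.length + 1 ≤ n := by omega
    set φ : ℝ → ℝ := fun t => md h (DL f l₁) l₂ (x + Pi.single a t) with hφ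
    set φ' : ℝ → ℝ := fun t => md h (DL f (a :: l₁)) l₂ (x + Pi.single a t) with hφ'
    have hseg : ∀ t : ℝ, 0 ≤ t → t ≤ h → x + Pi.single a t ∈ P d h l₂.length :=
      fun t ht0 ht1 => P_seg hh hx a ht0 ht1
    have hderiv : ∀ t : ℝ, 0 ≤ t → t ≤ h → HasDerivAt φ (φ' t) t := by
      intro t ht0 ht1
      obtain ⟨Φ, hΦ, hΦi⟩ := md_hasFDerivAt hf hh l₂ l₁ hlen1 _ (hseg t ht0 ht1)
      have hsingle : ∀ u : ℝ, (Pi.single a u : Fin d → ℝ) = u • (Pi.single a 1 : Fin d → ℝ) := by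
        intro u; rw [← Pi.single_smul]; norm_num
      have hline : HasDerivAt (fun t : ℝ => x + Pi.single a t)
          (Pi.single a 1 : Fin d → ℝ) t := by
        have hfe : (fun t : ℝ => x + Pi.single a t)
            = fun t : ℝ => x + t • (Pi.single a 1 : Fin d → ℝ) :=
          funext fun u => by rw [hsingle u]
        rw [hfe]
        simpa using ((hasDerivAt_id t).smul_const (Pi.single a 1 : Fin d → ℝ)).const_add x
      have := hΦ.comp_hasDerivAt t hline
      rw [hΦi a] at this
      exact this
    have hmvt := exists_hasDerivAt_eq_slope φ φ' hh
      (fun t ht => ((hderiv t ht.1 ht.2).continuousAt).continuousWithinAt)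
      (fun t ht => hderiv t ht.1.le ht.2.le)
    obtain ⟨θ, hθ, hslope⟩ := hmvt
    have hmid : x + Pi.single a θ ∈ P d h l₂.length := hseg θ hθ.1.le hθ.2.le
    obtain ⟨ξ, hξV, hξ⟩ := IH (a :: l₁) (by simp only [List.length_cons]; omega) _ hmid
    refine ⟨ξ, hξV, ?_⟩
    have hmd : md h (DL f l₁) (a :: l₂) x = φ h - φ 0 := by
      simp [md, hφ]
    have hval : φ h - φ 0 = h * φ' θ := by
      rw [hslope]
      field_simp
      rw [sub_zero, mul_div_assoc, div_self hh.ne', mul_one]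
    rw [hmd, hval]
    have hφθ : φ' θ = md h (DL f (a :: l₁)) l₂ (x + Pi.single a θ) := rfl
    rw [hφθ, hξ]
    have hlist : (a :: l₂).reverse ++ l₁ = l₂.reverse ++ (a :: l₁) := by simp
    rw [hlist]
    simp only [List.length_cons, pow_succ]
    ring
/-- translation of set integrals -/
lemma setIntegral_translate (F : (Fin d → ℝ) → ℝ) (c : Fin d → ℝ) {Q : Set (Fin d → ℝ)}
    (hQ : MeasurableSet Q) (hint : IntegrableOn F ((fun y => y - c) ⁻¹' Q)) :
    IntegrableOn (fun x => F (x + c)) Q ∧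
      ∫ x in Q, F (x + c) = ∫ y in (fun y => y - c) ⁻¹' Q, F y := by
  set Q' := (fun y => y - c) ⁻¹' Q with hQ'
  have hQ'm : MeasurableSet Q' := (measurable_sub_const c) hQ
  have hkey : ∀ x, Q.indicator (fun x => F (x + c)) x = Q'.indicator F (x + c) := by
    intro x
    by_cases hx : x ∈ Q
    · rw [Set.indicator_of_mem hx, Set.indicator_of_mem]
      simpa [hQ'] using hx
    · rw [Set.indicator_of_notMem hx, Set.indicator_of_notMem]
      simpa [hQ'] using hx
  have hint' : Integrable (Q'.indicator F) := (integrable_indicator_iff hQ'm).mpr hint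
  constructor
  · rw [← integrable_indicator_iff hQ]
    have := hint'.comp_add_right c
    refine this.congr ?_
    exact Filter.Eventually.of_forall fun x => (hkey x).symm
  · rw [← integral_indicator hQ, ← integral_indicator hQ'm]
    calc ∫ x, Q.indicator (fun x => F (x + c)) x = ∫ x, Q'.indicator F (x + c) := by
          congr 1; funext x; exact hkey x
      _ = ∫ y, Q'.indicator F y := integral_add_right_eq_self (Q'.indicator F) c

/-- integrability and integral bound for mixed differences of the density -/
lemma md_integral (hh : 0 < h) (hfi : IntegrableOn f (Sd d)) (hf0 : ∀ s, 0 ≤ f s)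
    (hf1 : (∫ s in Sd d, f s) = 1) :
    ∀ l : List (Fin d), ∀ Q : Set (Fin d → ℝ), MeasurableSet Q → Q ⊆ P d h l.length →
      IntegrableOn (md h f l) Q ∧ ∫ x in Q, |md h f l x| ≤ 2 ^ l.length := by
  intro l
  induction l with
  | nil =>
    intro Q hQm hQP
    simp only [List.length_nil] at hQP
    rw [P_zero] at hQP
    have hQSd : Q ⊆ Sd d := hQP.trans V_subset_Sd
    have hint : IntegrableOn f Q := hfi.mono_set hQSd
    refine ⟨hint, ?_⟩
    have habs : ∫ x in Q, |md h f [] x| = ∫ x in Q, f x := by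
      refine setIntegral_congr_fun hQm fun x _ => ?_
      simp [md, abs_of_nonneg (hf0 x)]
    rw [habs]
    calc ∫ x in Q, f x ≤ ∫ x in Sd d, f x :=
          setIntegral_mono_set hfi (Filter.Eventually.of_forall hf0)
            (HasSubset.Subset.eventuallyLE hQSd)
      _ = 1 := hf1
      _ ≤ 2 ^ ([] : List (Fin d)).length := by norm_num
  | cons i l IH =>
    intro Q hQm hQP
    simp only [List.length_cons] at hQP
    set c : Fin d → ℝ := Pi.single i h with hc
    set Q' := (fun y => y - c) ⁻¹' Q with hQ'
    have hQ'm : MeasurableSet Q' := (measurable_sub_const c) hQm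
    have hQ'P : Q' ⊆ P d h l.length := by
      intro y hy
      have : y - c ∈ P d h (l.length + 1) := hQP hy
      have := P_shift hh this i
      simpa [hc] using this
    have hQP' : Q ⊆ P d h l.length := hQP.trans (P_antitone hh (Nat.le_succ _))
    obtain ⟨hint1, hbd1⟩ := IH Q hQm hQP'
    obtain ⟨hint2, hbd2⟩ := IH Q' hQ'm hQ'P
    obtain ⟨hint3, heq3⟩ := setIntegral_translate (md h f l) c hQm hint2
    have hintc : IntegrableOn (md h f (i :: l)) Q := by
      have : md h f (i :: l) = fun x => md h f l (x + c) - md h f l x := rfl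
      rw [this]
      exact hint3.sub hint1
    refine ⟨hintc, ?_⟩
    have htri : ∫ x in Q, |md h f (i :: l) x| ≤
        (∫ x in Q, |md h f l (x + c)|) + ∫ x in Q, |md h f l x| := by
      have h1 : ∫ x in Q, |md h f (i :: l) x| ≤
          ∫ x in Q, (|md h f l (x + c)| + |md h f l x|) := by
        refine setIntegral_mono_on (hintc.abs) (hint3.abs.add hint1.abs) hQm fun x _ => ?_
        exact abs_sub _ _
      rw [integral_add hint3.abs hint1.abs] at h1
      exact h1
    obtain ⟨_, heq4⟩ := setIntegral_translate (fun y => |md h f l y|) c hQm hint2.abs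
    have hbd2' : ∫ x in Q, |md h f l (x + c)| ≤ 2 ^ l.length := by
      rw [heq4]; exact hbd2
    calc ∫ x in Q, |md h f (i :: l) x| ≤ _ := htri
      _ ≤ 2 ^ l.length + 2 ^ l.length := add_le_add hbd2' hbd1
      _ = 2 ^ (i :: l).length := by rw [List.length_cons]; ring

/-- The auxiliary box. -/
def Qbox (d : ℕ) : Set (Fin d → ℝ) :=
  Set.pi Set.univ fun _ : Fin d => Ioo (1 / (4 * d) : ℝ) (1 / (2 * d))

lemma Qbox_measurable : MeasurableSet (Qbox d) :=
  MeasurableSet.univ_pi fun _ => measurableSet_Ioo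

lemma Qbox_volume (hd : 1 ≤ d) :
    volume (Qbox d) = (ENNReal.ofReal (1 / (4 * d)))^d := by
  rw [Qbox, volume_pi_pi]
  have hlen : (1 / (2 * d) : ℝ) - 1 / (4 * d) = 1 / (4 * d) := by
    have hd0 : (0:ℝ) < d := by exact_mod_cast hd
    field_simp
    ring
  simp only [Real.volume_Ioo, Finset.prod_const, Finset.card_univ, Fintype.card_fin]
  rw [hlen]

lemma Qbox_volume_toReal (hd : 1 ≤ d) :
    (volume (Qbox d)).toReal = (1 / (4 * d) : ℝ)^d := by
  have hd0 : (0:ℝ) < d := by exact_mod_cast hd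
  rw [Qbox_volume hd, ← ENNReal.ofReal_pow (by positivity)]
  rw [ENNReal.toReal_ofReal (by positivity)]

lemma Qbox_volume_ne_top (hd : 1 ≤ d) : volume (Qbox d) ≠ ⊤ := by
  rw [Qbox_volume hd]
  exact ENNReal.pow_ne_top ENNReal.ofReal_ne_top

lemma Qbox_subset_P (hd : 1 ≤ d) (hh4 : 0 < h) (hnh : (n:ℝ) * h ≤ 1/4) {k : ℕ} (hk : k ≤ n) :
    Qbox d ⊆ P d h k := by
  intro x hx
  have hd0 : (0:ℝ) < d := by exact_mod_cast hd
  have hxi : ∀ i, 1 / (4 * d) < x i ∧ x i < 1 / (2 * d) := by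
    intro i; exact hx i (Set.mem_univ i)
  constructor
  · intro i
    have := (hxi i).1
    have : (0:ℝ) < 1 / (4 * d) := by positivity
    linarith [(hxi i).1]
  · have hsum : ∑ i, x i < ∑ _i : Fin d, (1 / (2*d) : ℝ) :=
      Finset.sum_lt_sum_of_nonempty (by simp [Finset.univ_nonempty_iff, ← Fin.pos_iff_nonempty]; omega)
        fun i _ => (hxi i).2
    have hsum2 : ∑ _i : Fin d, (1 / (2*d) : ℝ) = 1/2 := by
      rw [Finset.sum_const, Finset.card_univ, Fintype.card_fin, nsmul_eq_mul]
      field_simp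
    have hkh : (k:ℝ) * h ≤ (n:ℝ) * h := by
      have : (k:ℝ) ≤ n := by exact_mod_cast hk
      nlinarith
    show ∑ i, x i < 1 - (k:ℝ) * h
    nlinarith

/-- anchor: each partial derivative is small somewhere in `V d`. -/
lemma anchor (hd : 1 ≤ d) (hf : ContDiffOn ℝ (n : ℕ∞) f (interior (Sd d)))
    (hh : 0 < h) (hnh : (n:ℝ) * h ≤ 1/4)
    (hfi : IntegrableOn f (Sd d)) (hf0 : ∀ s, 0 ≤ f s) (hf1 : (∫ s in Sd d, f s) = 1)
    {j : ℕ} (hj : j ≤ n) (v : Fin j → Fin d) :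
    ∃ ξ ∈ V d, |Dpartial d j f v ξ| ≤ ((2:ℝ) ^ j + 1) / (1 / (4 * d) : ℝ)^d / h ^ j := by
  set l₂ := (List.ofFn v).reverse with hl₂
  have hlen : l₂.length = j := by simp [hl₂]
  have hQP : Qbox d ⊆ P d h l₂.length := by
    rw [hlen]; exact Qbox_subset_P hd hh hnh hj
  -- averaging: small value of md somewhere on Qbox
  obtain ⟨hint, hbd⟩ := md_integral hh hfi hf0 hf1 l₂ (Qbox d) Qbox_measurable hQP
  set vQ := ((1 / (4 * d) : ℝ))^d with hvQ
  have hd0 : (0:ℝ) < d := by exact_mod_cast hd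
  have hvQ0 : 0 < vQ := by positivity
  have hexists : ∃ x ∈ Qbox d, |md h f l₂ x| ≤ ((2:ℝ) ^ j + 1) / vQ := by
    by_contra hcon
    push_neg at hcon
    have hge := setIntegral_ge_of_const_le_real Qbox_measurable (Qbox_volume_ne_top hd)
      (fun x hx => (hcon x hx).le) hint.abs
    rw [Measure.real, Qbox_volume_toReal hd] at hge
    have : ((2:ℝ)^j + 1) / vQ * vQ = 2^j + 1 := by field_simp
    rw [← hvQ] at hge
    rw [this] at hge
    have h2 : ((2:ℝ)^j + 1 : ℝ) ≤ 2 ^ l₂.length := le_trans hge hbd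
    rw [hlen] at h2
    linarith
  obtain ⟨x, hxQ, hxsmall⟩ := hexists
  -- apply the mean value theorem for mixed differences
  have hx : x ∈ P d h l₂.length := hQP hxQ
  obtain ⟨ξ, hξV, hξ⟩ := mvt_md hf hh l₂ [] (by simpa [hlen] using hj) x hx
  refine ⟨ξ, hξV, ?_⟩
  have hDL : DL f [] = f := rfl
  have hrev : l₂.reverse ++ ([] : List (Fin d)) = List.ofFn v := by simp [hl₂]
  rw [hDL, hrev, hlen] at hξ
  have hbridge : Dpartial d j f v ξ = DL f (List.ofFn v) ξ :=
    bridge hf j hj v ξ (V_subset_int hξV)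
  have habs : |Dpartial d j f v ξ| = |md h f l₂ x| / h ^ j := by
    rw [hbridge]
    rw [hξ]
    rw [abs_mul, abs_of_nonneg (by positivity : (0:ℝ) ≤ h ^ j)]
    field_simp
  rw [habs]
  have hre : ((2:ℝ) ^ j + 1) / (1 / (4 * (d:ℝ)) : ℝ)^d / h ^ j
      = (((2:ℝ)^j + 1)/vQ) / h^j := by rw [hvQ]
  rw [hre]
  gcongr
/-- oscillation bound from derivative bound -/
lemma osc_step (hf : ContDiffOn ℝ (n : ℕ∞) f (interior (Sd d))) {j : ℕ} (hj : j < n)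
    (v : Fin j → Fin d) {M' : ℝ} (hM0 : 0 ≤ M')
    (hM : ∀ i : Fin d, ∀ x ∈ interior (Sd d), |Dpartial d (j+1) f (Fin.cons i v) x| ≤ M')
    {s t : Fin d → ℝ} (hs : s ∈ interior (Sd d)) (ht : t ∈ interior (Sd d)) :
    |Dpartial d j f v s - Dpartial d j f v t| ≤ 2 * M' := by
  set φ : ℝ → ℝ := fun u => Dpartial d j f v (t + u • (s - t)) with hφ
  set φ' : ℝ → ℝ := fun u =>
    ∑ i, (s i - t i) * Dpartial d (j+1) f (Fin.cons i v) (t + u • (s - t)) with hφ'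
  have hmem : ∀ u : ℝ, 0 ≤ u → u ≤ 1 → t + u • (s - t) ∈ interior (Sd d) := by
    intro u hu0 hu1
    have := convex_int ht hs (by linarith : (0:ℝ) ≤ 1 - u) hu0 (by ring)
    convert this using 1
    funext i
    simp [Pi.add_apply, Pi.smul_apply]
    ring
  have hst : (s - t : Fin d → ℝ) = ∑ i, (s i - t i) • (Pi.single i 1 : Fin d → ℝ) := by
    have h1 : ∀ i, (s i - t i) • (Pi.single i 1 : Fin d → ℝ) = Pi.single i ((s - t) i) := by
      intro i
      rw [← Pi.single_smul, smul_eq_mul, mul_one]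
      rfl
    calc (s - t : Fin d → ℝ) = ∑ i, Pi.single i ((s - t) i) :=
          (Finset.univ_sum_single _).symm
      _ = ∑ i, (s i - t i) • (Pi.single i 1 : Fin d → ℝ) :=
          Finset.sum_congr rfl fun i _ => (h1 i).symm
  have hderiv : ∀ u : ℝ, 0 ≤ u → u ≤ 1 → HasDerivAt φ (φ' u) u := by
    intro u hu0 hu1
    obtain ⟨Φ, hΦ, hΦi⟩ := hasFDerivAt_Dpartial hf hj v (hmem u hu0 hu1)
    have hline : HasDerivAt (fun u : ℝ => t + u • (s - t)) (s - t) u := by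
      simpa using ((hasDerivAt_id u).smul_const (s - t)).const_add t
    have hcomp := hΦ.comp_hasDerivAt u hline
    have hval : Φ (s - t) = φ' u := by
      rw [hst, map_sum]
      refine Finset.sum_congr rfl fun i _ => ?_
      rw [_root_.map_smul, smul_eq_mul, hΦi i]
    rw [hval] at hcomp
    exact hcomp
  obtain ⟨θ, hθ, hslope⟩ := exists_hasDerivAt_eq_slope φ φ' one_pos
    (fun u hu => ((hderiv u hu.1 hu.2).continuousAt).continuousWithinAt)
    (fun u hu => hderiv u hu.1.le hu.2.le)
  have hφ1 : φ 1 = Dpartial d j f v s := by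
    simp only [hφ, one_smul]
    congr 1
    funext i
    simp
  have hφ0 : φ 0 = Dpartial d j f v t := by
    simp only [hφ, zero_smul, add_zero]
  have hdiff : Dpartial d j f v s - Dpartial d j f v t = φ' θ := by
    rw [← hφ1, ← hφ0, hslope]
    norm_num
  rw [hdiff]
  have hb : |φ' θ| ≤ ∑ i, |s i - t i| * M' := by
    refine le_trans (Finset.abs_sum_le_sum_abs _ _) ?_
    refine Finset.sum_le_sum fun i _ => ?_
    rw [abs_mul]
    exact mul_le_mul_of_nonneg_left
      (hM i _ (hmem θ hθ.1.le hθ.2.le)) (abs_nonneg _)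
  refine le_trans hb ?_
  rw [← Finset.sum_mul]
  have h2 := sum_abs_sub_le (interior_subset hs) (interior_subset ht)
  nlinarith

lemma mOf_cast (hβ : 0 < β) : (mOf β : ℝ) = (⌈β⌉₊ : ℝ) - 1 := by
  have h1 : 1 ≤ ⌈β⌉₊ := Nat.one_le_ceil_iff.mpr hβ
  rw [mOf, Nat.cast_sub h1, Nat.cast_one]

lemma mOf_lt (hβ : 0 < β) : (mOf β : ℝ) < β := by
  rw [mOf_cast hβ]
  have := Nat.ceil_lt_add_one hβ.le
  linarith

lemma le_mOf_succ (hβ : 0 < β) : β ≤ (mOf β : ℝ) + 1 := by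
  rw [mOf_cast hβ]
  have := Nat.le_ceil β
  linarith

/-- top-level oscillation bound from the Hölder condition -/
lemma top_osc {β L : ℝ} (hβ : 0 < β) (hL : 0 < L) (hf : f ∈ holderClass d β L)
    {s t : Fin d → ℝ} (hs : s ∈ interior (Sd d)) (ht : t ∈ interior (Sd d))
    (v : Fin (mOf β) → Fin d) :
    |Dpartial d (mOf β) f v s - Dpartial d (mOf β) f v t| ≤ 2 * L := by
  obtain ⟨hf0, hfout, hf1, hreg, hHol⟩ := hf
  refine le_trans (hHol v s hs t ht) ?_
  set η := β - (mOf β : ℝ) with hη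
  have hη0 : 0 < η := by have := mOf_lt hβ; simp only [hη]; linarith
  have hη1 : η ≤ 1 := by have := le_mOf_succ hβ; simp only [hη]; linarith
  set x := ∑ i, |s i - t i| with hx
  have hx0 : 0 ≤ x := Finset.sum_nonneg fun i _ => abs_nonneg _
  have hx2 : x ≤ 2 := sum_abs_sub_le (interior_subset hs) (interior_subset ht)
  have h1 : x ^ η ≤ (2:ℝ) ^ η := Real.rpow_le_rpow hx0 hx2 hη0.le
  have h2 : (2:ℝ) ^ η ≤ (2:ℝ) ^ (1:ℝ) :=
    Real.rpow_le_rpow_of_exponent_le (by norm_num) hη1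
  rw [Real.rpow_one] at h2
  calc L * x ^ η ≤ L * 2 := by nlinarith
    _ = 2 * L := by ring

theorem holder_class_derivatives_bounded' (d : ℕ) (hd : 1 ≤ d) (β L : ℝ)
    (hβ : 0 < β) (hL : 0 < L) :
    ∃ M : ℝ, ∀ f ∈ holderClass d β L, ∀ j : ℕ, j ≤ mOf β →
      ∀ v : Fin j → Fin d, ∀ s ∈ interior (Sd d), |Dpartial d j f v s| ≤ M := by
  classical
  set n := mOf β with hn
  set h : ℝ := 1 / (4 * (n + 1)) with hh_def
  have hh : 0 < h := by positivity
  have hh1 : h ≤ 1 := by rw [hh_def]; rw [div_le_one (by positivity)]; nlinarith [Nat.cast_nonneg (α := ℝ) n]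
  have hnh : (n:ℝ) * h ≤ 1/4 := by
    rw [hh_def, mul_one_div, div_le_div_iff₀ (by positivity) (by norm_num)]
    nlinarith [Nat.cast_nonneg (α := ℝ) n]
  set vQ : ℝ := (1 / (4 * d) : ℝ)^d with hvQ
  have hd0 : (0:ℝ) < d := by exact_mod_cast hd
  have hvQ0 : 0 < vQ := by positivity
  set Amax : ℝ := ((2:ℝ) ^ n + 1) / vQ / h ^ n with hAmax
  have hAmax0 : 0 ≤ Amax := by positivity
  have hAj : ∀ j : ℕ, j ≤ n → ((2:ℝ) ^ j + 1) / vQ / h ^ j ≤ Amax := by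
    intro j hj
    rw [hAmax]
    refine div_le_div₀ (by positivity) ?_ (by positivity) ?_
    · gcongr <;> norm_num
    · exact pow_le_pow_of_le_one hh.le hh1 hj
  set c₀ : ℝ := Amax + 2 * L with hc₀
  have hc₀0 : 0 ≤ c₀ := by positivity
  refine ⟨c₀ * 3 ^ n, ?_⟩
  intro f hf
  obtain ⟨hf0, hfout, hf1, hreg, hHol⟩ := hf
  have hreg' : ContDiffOn ℝ (n : ℕ∞) f (interior (Sd d)) := by exact_mod_cast hreg
  have hfi : IntegrableOn f (Sd d) := by
    by_contra hcon
    rw [MeasureTheory.integral_undef hcon] at hf1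
    norm_num at hf1
  -- main downward induction
  have main : ∀ k : ℕ, ∀ j : ℕ, j ≤ n → n - j ≤ k → ∀ v : Fin j → Fin d,
      ∀ s ∈ interior (Sd d), |Dpartial d j f v s| ≤ c₀ * 3 ^ (n - j) := by
    intro k
    induction k with
    | zero =>
      intro j hj hjk v s hs
      have hjn : j = n := by omega
      subst hjn
      obtain ⟨ξ, hξV, hξ⟩ := anchor hd hreg' hh hnh hfi hf0 hf1 le_rfl v
      have hosc : |Dpartial d n f v s - Dpartial d n f v ξ| ≤ 2 * L :=
        top_osc hβ hL ⟨hf0, hfout, hf1, hreg, hHol⟩ hs (V_subset_int hξV) v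
      have htri : |Dpartial d n f v s| ≤ |Dpartial d n f v ξ|
          + |Dpartial d n f v s - Dpartial d n f v ξ| := by
        calc |Dpartial d n f v s|
            = |Dpartial d n f v ξ + (Dpartial d n f v s - Dpartial d n f v ξ)| := by ring_nf
          _ ≤ _ := abs_add_le _ _
      have hA := hAj n le_rfl
      have hnn : n - n = 0 := by omega
      rw [hnn, pow_zero, mul_one, hc₀]
      rw [← hvQ] at hξ
      linarith
    | succ k IH =>
      intro j hj hjk v s hs
      by_cases hcase : n - j ≤ k
      · exact IH j hj hcase v s hs
      · have hkj : n - j = k + 1 := by omega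
        have hjlt : j < n := by omega
        obtain ⟨ξ, hξV, hξ⟩ := anchor hd hreg' hh hnh hfi hf0 hf1 hj v
        rw [← hvQ] at hξ
        have hM : ∀ i : Fin d, ∀ x ∈ interior (Sd d),
            |Dpartial d (j+1) f (Fin.cons i v) x| ≤ c₀ * 3 ^ k := by
          intro i x hx
          have := IH (j+1) (by omega) (by omega) (Fin.cons i v) x hx
          have hexp : n - (j+1) = k := by omega
          rwa [hexp] at this
        have hosc := osc_step hreg' hjlt v (by positivity : (0:ℝ) ≤ c₀ * 3^k) hM
          hs (V_subset_int hξV)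
        have htri : |Dpartial d j f v s| ≤ |Dpartial d j f v ξ|
            + |Dpartial d j f v s - Dpartial d j f v ξ| := by
          calc |Dpartial d j f v s|
              = |Dpartial d j f v ξ + (Dpartial d j f v s - Dpartial d j f v ξ)| := by ring_nf
            _ ≤ _ := abs_add_le _ _
        have hA := hAj j hj
        rw [hkj, pow_succ]
        have h3 : (1:ℝ) ≤ 3 ^ k := one_le_pow₀ (by norm_num)
        nlinarith [pow_pos (by norm_num : (0:ℝ) < 3) k, h3, hc₀0, hL, hA, hξ, hosc, htri, hAmax0]
  intro j hj v s hs
  have := main n j hj (by omega) v s hs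
  refine le_trans this ?_
  have h3 : (3:ℝ) ^ (n - j) ≤ 3 ^ n := by
    gcongr
    · norm_num
    · omega
  nlinarith


end HolderAux

/-- Remark 1: all partial derivatives of order at most `m` of members of
`Σ(d,β,L)` are uniformly bounded on the interior of the simplex, by a constant
`M = M(d,β,L)`. -/

theorem holder_class_derivatives_bounded (d : ℕ) (hd : 1 ≤ d) (β L : ℝ)
    (hβ : 0 < β) (hL : 0 < L) :
    ∃ M : ℝ, ∀ f ∈ holderClass d β L, ∀ j : ℕ, j ≤ mOf β →
      ∀ v : Fin j → Fin d, ∀ s ∈ interior (Sd d), |Dpartial d j f v s| ≤ M :=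
  HolderAux.holder_class_derivatives_bounded' d hd β L hβ hL
end
end

section
/- Let d ≥ 1. There exists b_0 > 0 (depending only on d) such that for all b ∈ (0, b_0) and all s ∈ S_d, the Dirichlet(s/b + 1, (1−‖s‖₁)/b + 1) distribution with density t ↦ K_{s/b + 1, (1−‖s‖₁)/b + 1}(t) on S_d satisfies ∫_{S_d} ‖t − s‖₁ · K_{s/b + 1, (1−‖s‖₁)/b + 1}(t) dt ≤ d · b^{1/2}. -/
open MeasureTheory Filter Topology
open scoped ENNReal BigOperators

noncomputable section

namespace DirAux

def Tset (d : ℕ) (c : ℝ) : Set (Fin d → ℝ) := {t | (∀ i, 0 ≤ t i) ∧ ∑ i, t i ≤ c}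

lemma measurableSet_Tset (d : ℕ) (c : ℝ) : MeasurableSet (Tset d c) := by
  have h1 : MeasurableSet {t : Fin d → ℝ | ∀ i, 0 ≤ t i} := by
    rw [Set.setOf_forall]
    exact MeasurableSet.iInter fun i => measurableSet_le measurable_const (measurable_pi_apply i)
  have h2 : MeasurableSet {t : Fin d → ℝ | ∑ i, t i ≤ c} :=
    measurableSet_le (Finset.measurable_sum _ fun i _ => measurable_pi_apply i) measurable_const
  exact h1.inter h2

lemma measurable_W (d : ℕ) (u : Fin d → ℝ) (v c : ℝ) :
    Measurable fun t : Fin d → ℝ => (c - ∑ i, t i) ^ (v-1) * ∏ i, (t i) ^ (u i - 1) := by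
  fun_prop

lemma lint_beta {a w c : ℝ} (ha : 1 ≤ a) (hw : 1 ≤ w) (hc : 0 ≤ c) :
    ∫⁻ x in Set.Icc 0 c, ENNReal.ofReal (x ^ (a-1) * (c - x) ^ (w-1)) =
      ENNReal.ofReal (c ^ (a+w-1) * (Real.Gamma a * Real.Gamma w / Real.Gamma (a+w))) := by
  have ha0 : (0:ℝ) < a := lt_of_lt_of_le one_pos ha
  have hw0 : (0:ℝ) < w := lt_of_lt_of_le one_pos hw
  rcases eq_or_lt_of_le hc with rfl | hc0
  · rw [Set.Icc_self]
    rw [Real.zero_rpow (by linarith : a + w - 1 ≠ 0)]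
    simp [Measure.restrict_singleton]
  · have hbeta : Complex.betaIntegral a w =
        ((Real.Gamma a * Real.Gamma w / Real.Gamma (a+w) : ℝ) : ℂ) := by
      have h := Complex.Gamma_mul_Gamma_eq_betaIntegral
        (s := (a:ℂ)) (t := (w:ℂ)) (by simpa using ha0) (by simpa using hw0)
      have hco : ((a:ℂ) + w) = ((a+w : ℝ) : ℂ) := by push_cast; ring
      rw [hco, Complex.Gamma_ofReal, Complex.Gamma_ofReal, Complex.Gamma_ofReal] at h
      have hne : ((Real.Gamma (a+w) : ℝ) : ℂ) ≠ 0 := by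
        exact_mod_cast (Real.Gamma_pos_of_pos (by linarith : (0:ℝ) < a + w)).ne'
      push_cast
      rw [eq_div_iff hne, mul_comm]
      exact h.symm
    have hscaled := Complex.betaIntegral_scaled (a:ℂ) (w:ℂ) hc0
    have hre : ∫ x in (0:ℝ)..c, ((x ^ (a-1) * (c - x) ^ (w-1) : ℝ) : ℂ) =
        ∫ x in (0:ℝ)..c, (x:ℂ) ^ ((a:ℂ)-1) * ((c:ℂ) - x) ^ ((w:ℂ)-1) := by
      refine intervalIntegral.integral_congr fun x hx => ?_
      rw [Set.uIcc_of_le hc] at hx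
      push_cast
      rw [Complex.ofReal_cpow hx.1 (a-1), Complex.ofReal_cpow (sub_nonneg.2 hx.2) (w-1)]
      push_cast
      ring
    rw [intervalIntegral.integral_ofReal] at hre
    have hrhs : ((c:ℂ)) ^ ((a:ℂ) + (w:ℂ) - 1) = ((c ^ (a+w-1) : ℝ) : ℂ) := by
      rw [Complex.ofReal_cpow hc (a+w-1)]
      push_cast
      ring_nf
    have hkey : (∫ x in (0:ℝ)..c, x ^ (a-1) * (c - x) ^ (w-1)) =
        c ^ (a+w-1) * (Real.Gamma a * Real.Gamma w / Real.Gamma (a+w)) := by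
      have := hre.trans (hscaled.trans (by rw [hrhs, hbeta, ← Complex.ofReal_mul]))
      exact_mod_cast this
    have hmeas : Measurable fun x : ℝ => x ^ (a-1) * (c - x) ^ (w-1) := by fun_prop
    have hint : IntegrableOn (fun x : ℝ => x ^ (a-1) * (c - x) ^ (w-1)) (Set.Ioc 0 c) := by
      refine Measure.integrableOn_of_bounded (M := c ^ (a-1) * c ^ (w-1))
        measure_Ioc_lt_top.ne hmeas.aestronglyMeasurable ?_
      filter_upwards [ae_restrict_mem measurableSet_Ioc] with x hx
      have hx0 : (0:ℝ) ≤ x := hx.1.le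
      have hcx : (0:ℝ) ≤ c - x := by linarith [hx.2]
      have h1 : x ^ (a-1) ≤ c ^ (a-1) := Real.rpow_le_rpow hx0 hx.2 (by linarith)
      have h2 : (c - x) ^ (w-1) ≤ c ^ (w-1) :=
        Real.rpow_le_rpow hcx (by linarith [hx.1]) (by linarith)
      have p1 : (0:ℝ) ≤ x ^ (a-1) := Real.rpow_nonneg hx0 _
      have p2 : (0:ℝ) ≤ (c - x) ^ (w-1) := Real.rpow_nonneg hcx _
      rw [Real.norm_eq_abs, abs_of_nonneg (mul_nonneg p1 p2)]
      exact mul_le_mul h1 h2 p2 (Real.rpow_nonneg hc _)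
    have hnn : 0 ≤ᵐ[volume.restrict (Set.Ioc 0 c)]
        fun x : ℝ => x ^ (a-1) * (c - x) ^ (w-1) := by
      filter_upwards [ae_restrict_mem measurableSet_Ioc] with x hx
      exact mul_nonneg (Real.rpow_nonneg hx.1.le _) (Real.rpow_nonneg (by linarith [hx.2]) _)
    have := MeasureTheory.ofReal_integral_eq_lintegral_ofReal hint hnn
    rw [setLIntegral_congr (Filter.EventuallyEq.symm Ioc_ae_eq_Icc), ← this,
      ← intervalIntegral.integral_of_le hc, hkey]

lemma lint_dirichlet : ∀ (d : ℕ) (u : Fin d → ℝ) (v c : ℝ), (∀ i, 1 ≤ u i) → 1 ≤ v → 0 ≤ c →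
    ∫⁻ t in Tset d c, ENNReal.ofReal ((c - ∑ i, t i) ^ (v-1) * ∏ i, (t i) ^ (u i - 1)) =
      ENNReal.ofReal (c ^ (∑ i, u i + v - 1) *
        ((∏ i, Real.Gamma (u i)) * Real.Gamma v / Real.Gamma (∑ i, u i + v))) := by
  intro d
  induction d with
  | zero =>
    intro u v c hu hv hc
    have hT : Tset 0 c = Set.univ := by
      ext t
      simp [Tset, hc]
    rw [hT, Measure.restrict_univ]
    simp only [Finset.univ_eq_empty, Finset.sum_empty, Finset.prod_empty, sub_zero, mul_one,
      zero_add]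
    rw [lintegral_const]
    have : (volume : Measure (Fin 0 → ℝ)) Set.univ = 1 := by
      rw [MeasureTheory.volume_pi, Measure.pi_univ]
      simp
    rw [this, mul_one]
    congr 1
    rw [one_mul, div_self (Real.Gamma_pos_of_pos (by linarith : (0:ℝ) < v)).ne', mul_one]
  | succ d IH =>
    intro u v c hu hv hc
    set a := u 0 with ha_def
    set u' : Fin d → ℝ := fun j => u j.succ with hu'_def
    have hu' : ∀ j, 1 ≤ u' j := fun j => hu _
    have ha1 : 1 ≤ a := hu 0
    set w : ℝ := ∑ j, u' j + v with hw_def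
    have hw1 : 1 ≤ w := by
      have : (0:ℝ) ≤ ∑ j, u' j := Finset.sum_nonneg fun j _ => by linarith [hu' j]
      simp only [hw_def]; linarith
    set Cd : ℝ := (∏ j, Real.Gamma (u' j)) * Real.Gamma v / Real.Gamma w with hCd_def
    have hCd0 : 0 ≤ Cd := by
      apply div_nonneg (mul_nonneg (Finset.prod_nonneg fun j _ =>
        (Real.Gamma_pos_of_pos (by linarith [hu' j] : (0:ℝ) < u' j)).le)
        (Real.Gamma_pos_of_pos (by linarith : (0:ℝ) < v)).le)
        (Real.Gamma_pos_of_pos (by linarith : (0:ℝ) < w)).le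
    set F : (Fin (d+1) → ℝ) → ℝ≥0∞ := fun t =>
      ENNReal.ofReal ((c - ∑ i, t i) ^ (v-1) * ∏ i, (t i) ^ (u i - 1)) with hF_def
    have hFmeas : Measurable F := by
      apply Measurable.ennreal_ofReal
      fun_prop
    have e := MeasurableEquiv.piFinSuccAbove (fun _ : Fin (d+1) => ℝ) 0
    -- step 1: set integral → integral of indicator
    rw [← lintegral_indicator (measurableSet_Tset _ _)]
    -- step 2: transfer along the equivalence
    have hmp := (volume_preserving_piFinSuccAbove (fun _ : Fin (d+1) => ℝ) 0).symm
    have hIndMeas : Measurable ((Tset (d+1) c).indicator F) :=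
      hFmeas.indicator (measurableSet_Tset _ _)
    rw [← hmp.lintegral_comp hIndMeas]
    -- step 3: Fubini
    rw [Measure.volume_eq_prod]
    rw [lintegral_prod _ (by
      apply Measurable.aemeasurable
      exact hIndMeas.comp (MeasurableEquiv.measurable _))]
    -- identify the symm application
    have hsymm : ∀ (x : ℝ) (y : Fin d → ℝ),
        (MeasurableEquiv.piFinSuccAbove (fun _ : Fin (d+1) => ℝ) 0).symm (x, y) = Fin.cons x y := by
      intro x y
      rw [MeasurableEquiv.piFinSuccAbove_symm_apply]
      exact Fin.insertNth_zero' x y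
    have hinner : ∀ x : ℝ, (∫⁻ y, (Tset (d+1) c).indicator F (Fin.cons x y)) =
        (Set.Icc (0:ℝ) c).indicator
          (fun x => ENNReal.ofReal (x ^ (a-1) * ((c-x) ^ (w-1) * Cd))) x := by
      intro x
      by_cases hx : x ∈ Set.Icc (0:ℝ) c
      · rw [Set.indicator_of_mem hx]
        have hmem : ∀ y : Fin d → ℝ, (Fin.cons x y ∈ Tset (d+1) c) ↔ y ∈ Tset d (c - x) := by
          intro y
          constructor
          · rintro ⟨h1, h2⟩
            refine ⟨fun j => by simpa using h1 j.succ, ?_⟩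
            rw [Fin.sum_cons] at h2
            linarith
          · rintro ⟨h1, h2⟩
            refine ⟨fun i => ?_, ?_⟩
            · refine Fin.cases ?_ ?_ i
              · simpa using hx.1
              · intro j; simpa using h1 j
            · rw [Fin.sum_cons]; linarith
        have hval : ∀ y : Fin d → ℝ,
            F (Fin.cons x y) = ENNReal.ofReal (x ^ (a-1)) *
              ENNReal.ofReal ((c - x - ∑ j, y j) ^ (v-1) * ∏ j, (y j) ^ (u' j - 1)) := by
          intro y
          simp only [hF_def]
          rw [Fin.sum_cons, Fin.prod_univ_succ]
          simp only [Fin.cons_zero, Fin.cons_succ]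
          rw [← ENNReal.ofReal_mul (Real.rpow_nonneg hx.1 _)]
          have hcc : c - (x + ∑ j, y j) = c - x - ∑ j, y j := by ring
          rw [hcc, ← ha_def]
          congr 1
          simp only [hu'_def]
          ring
        have step1 : (∫⁻ y, (Tset (d+1) c).indicator F (Fin.cons x y)) =
            ∫⁻ y, (Tset d (c-x)).indicator (fun y => ENNReal.ofReal (x ^ (a-1)) *
              ENNReal.ofReal ((c - x - ∑ j, y j) ^ (v-1) * ∏ j, (y j) ^ (u' j - 1))) y := by
          apply lintegral_congr
          intro y
          by_cases hy : y ∈ Tset d (c - x)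
          · rw [Set.indicator_of_mem ((hmem y).mpr hy), Set.indicator_of_mem hy, hval y]
          · rw [Set.indicator_of_notMem (fun h => hy ((hmem y).mp h)),
              Set.indicator_of_notMem hy]
        rw [step1, lintegral_indicator (measurableSet_Tset d (c-x)),
          lintegral_const_mul' _ _ ENNReal.ofReal_ne_top,
          IH u' v (c-x) hu' hv (by linarith [hx.2] : (0:ℝ) ≤ c - x)]
        rw [← hw_def, ← hCd_def, ← ENNReal.ofReal_mul (Real.rpow_nonneg hx.1 _)]
      · rw [Set.indicator_of_notMem hx]
        have hz : ∀ y : Fin d → ℝ, (Tset (d+1) c).indicator F (Fin.cons x y) = 0 := by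
          intro y
          apply Set.indicator_of_notMem
          rintro ⟨h1, h2⟩
          rw [Fin.sum_cons] at h2
          have hx0 : (0:ℝ) ≤ x := by simpa using h1 0
          have hy0 : (0:ℝ) ≤ ∑ j, y j := Finset.sum_nonneg fun j _ => by simpa using h1 j.succ
          exact hx ⟨hx0, by linarith⟩
        simp only [hz, lintegral_zero]
    calc (∫⁻ x : ℝ, ∫⁻ y : Fin d → ℝ,
            (Tset (d+1) c).indicator F
              ((MeasurableEquiv.piFinSuccAbove (fun _ : Fin (d+1) => ℝ) 0).symm (x, y)))
        = ∫⁻ x : ℝ, (Set.Icc (0:ℝ) c).indicator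
            (fun x => ENNReal.ofReal (x ^ (a-1) * ((c-x) ^ (w-1) * Cd))) x := by
          apply lintegral_congr
          intro x
          rw [← hinner x]
          apply lintegral_congr
          intro y
          rw [hsymm]
      _ = ∫⁻ x : ℝ in Set.Icc 0 c,
            ENNReal.ofReal (x ^ (a-1) * ((c-x) ^ (w-1) * Cd)) := by
          rw [lintegral_indicator measurableSet_Icc]
      _ = ∫⁻ x : ℝ in Set.Icc 0 c,
            ENNReal.ofReal (x ^ (a-1) * (c-x) ^ (w-1)) * ENNReal.ofReal Cd := by
          apply setLIntegral_congr_fun measurableSet_Icc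
          intro x hx
          beta_reduce
          rw [← ENNReal.ofReal_mul (mul_nonneg (Real.rpow_nonneg hx.1 _)
            (Real.rpow_nonneg (by linarith [hx.2] : (0:ℝ) ≤ c - x) _))]
          congr 1
          ring
      _ = ENNReal.ofReal (c ^ (a+w-1) * (Real.Gamma a * Real.Gamma w / Real.Gamma (a+w))) *
            ENNReal.ofReal Cd := by
          rw [lintegral_mul_const' _ _ ENNReal.ofReal_ne_top, lint_beta ha1 hw1 hc]
      _ = ENNReal.ofReal (c ^ (∑ i : Fin (d+1), u i + v - 1) *
            ((∏ i : Fin (d+1), Real.Gamma (u i)) * Real.Gamma v /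
              Real.Gamma (∑ i : Fin (d+1), u i + v))) := by
          rw [← ENNReal.ofReal_mul (by positivity)]
          congr 1
          have hsum : ∑ i : Fin (d+1), u i = a + ∑ j, u' j := by
            rw [Fin.sum_univ_succ]
          have hprod : ∏ i : Fin (d+1), Real.Gamma (u i) =
              Real.Gamma a * ∏ j, Real.Gamma (u' j) := by
            rw [Fin.prod_univ_succ]
          have haw : a + w = ∑ i : Fin (d+1), u i + v := by
            rw [hsum, hw_def]; ring
          have hGw : Real.Gamma w ≠ 0 := (Real.Gamma_pos_of_pos (by linarith)).ne'
          rw [hCd_def, ← haw, hprod]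
          field_simp

lemma Sd_eq_Tset (d : ℕ) : Sd d = Tset d 1 := by
  ext t
  constructor
  · rintro ⟨h1, h2⟩
    exact ⟨fun i => (h1 i).1, h2⟩
  · rintro ⟨h1, h2⟩
    refine ⟨fun i => ⟨h1 i, ?_⟩, h2⟩
    calc t i ≤ ∑ j, t j := Finset.single_le_sum (fun j _ => h1 j) (Finset.mem_univ i)
      _ ≤ 1 := h2

lemma measurableSet_Sd (d : ℕ) : MeasurableSet (Sd d) := by
  rw [Sd_eq_Tset]; exact measurableSet_Tset d 1

lemma volume_Sd_lt_top (d : ℕ) : volume (Sd d) < ⊤ := by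
  have hsub : Sd d ⊆ Set.univ.pi fun _ : Fin d => Set.Icc (0:ℝ) 1 := by
    intro t ht i _
    exact ⟨(ht.1 i).1, (ht.1 i).2⟩
  calc volume (Sd d) ≤ volume (Set.univ.pi fun _ : Fin d => Set.Icc (0:ℝ) 1) :=
        measure_mono hsub
    _ = ∏ _i : Fin d, volume (Set.Icc (0:ℝ) 1) := volume_pi_pi _
    _ < ⊤ := by simp

lemma intOn_bounded {d : ℕ} {f : (Fin d → ℝ) → ℝ} (hf : Measurable f) {M : ℝ}
    (hM : ∀ t ∈ Sd d, |f t| ≤ M) : IntegrableOn f (Sd d) := by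
  refine Measure.integrableOn_of_bounded (M := M) (volume_Sd_lt_top d).ne
    hf.aestronglyMeasurable ?_
  filter_upwards [ae_restrict_mem (measurableSet_Sd d)] with t ht
  simpa [Real.norm_eq_abs] using hM t ht

lemma W_nonneg {d : ℕ} {u : Fin d → ℝ} {v : ℝ} {t : Fin d → ℝ} (ht : t ∈ Sd d) :
    0 ≤ (1 - ∑ i, t i) ^ (v-1) * ∏ i, (t i) ^ (u i - 1) :=
  mul_nonneg (Real.rpow_nonneg (by linarith [ht.2]) _)
    (Finset.prod_nonneg fun i _ => Real.rpow_nonneg (ht.1 i).1 _)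

lemma W_le_one {d : ℕ} {u : Fin d → ℝ} {v : ℝ} (hu : ∀ i, 1 ≤ u i) (hv : 1 ≤ v)
    {t : Fin d → ℝ} (ht : t ∈ Sd d) :
    (1 - ∑ i, t i) ^ (v-1) * ∏ i, (t i) ^ (u i - 1) ≤ 1 := by
  have hs0 : 0 ≤ ∑ i, t i := Finset.sum_nonneg fun i _ => (ht.1 i).1
  have h1 : (1 - ∑ i, t i) ^ (v-1) ≤ 1 :=
    Real.rpow_le_one (by linarith [ht.2]) (by linarith) (by linarith)
  have h2 : (∏ i, (t i) ^ (u i - 1)) ≤ 1 :=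
    Finset.prod_le_one (fun i _ => Real.rpow_nonneg (ht.1 i).1 _)
      (fun i _ => Real.rpow_le_one (ht.1 i).1 (ht.1 i).2 (by linarith [hu i]))
  calc (1 - ∑ i, t i) ^ (v-1) * ∏ i, (t i) ^ (u i - 1)
      ≤ 1 * 1 := mul_le_mul h1 h2 (Finset.prod_nonneg fun i _ =>
        Real.rpow_nonneg (ht.1 i).1 _) (by norm_num)
    _ = 1 := by norm_num

lemma integrableOn_W {d : ℕ} (u : Fin d → ℝ) (v : ℝ) (hu : ∀ i, 1 ≤ u i) (hv : 1 ≤ v) :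
    IntegrableOn (fun t => (1 - ∑ i, t i) ^ (v-1) * ∏ i, (t i) ^ (u i - 1)) (Sd d) := by
  refine intOn_bounded (by fun_prop) (M := 1) fun t ht => ?_
  rw [abs_of_nonneg (W_nonneg ht)]
  exact W_le_one hu hv ht

lemma integral_dirichlet (d : ℕ) (u : Fin d → ℝ) (v : ℝ) (hu : ∀ i, 1 ≤ u i) (hv : 1 ≤ v) :
    ∫ t in Sd d, (1 - ∑ i, t i) ^ (v-1) * ∏ i, (t i) ^ (u i - 1) =
      (∏ i, Real.Gamma (u i)) * Real.Gamma v / Real.Gamma (∑ i, u i + v) := by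
  have hnn : 0 ≤ᵐ[volume.restrict (Sd d)]
      fun t => (1 - ∑ i, t i) ^ (v-1) * ∏ i, (t i) ^ (u i - 1) := by
    filter_upwards [ae_restrict_mem (measurableSet_Sd d)] with t ht
    exact W_nonneg ht
  have h := MeasureTheory.ofReal_integral_eq_lintegral_ofReal (integrableOn_W u v hu hv) hnn
  have h2 : (∫⁻ t in Sd d, ENNReal.ofReal ((1 - ∑ i, t i) ^ (v-1) * ∏ i, (t i) ^ (u i - 1))) =
      ENNReal.ofReal ((∏ i, Real.Gamma (u i)) * Real.Gamma v / Real.Gamma (∑ i, u i + v)) := by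
    rw [Sd_eq_Tset]
    have := lint_dirichlet d u v 1 hu hv (by norm_num)
    rw [this, Real.one_rpow, one_mul]
  rw [h2] at h
  have hpos : (0:ℝ) ≤ (∏ i, Real.Gamma (u i)) * Real.Gamma v / Real.Gamma (∑ i, u i + v) := by
    have h1 : (0:ℝ) < ∏ i, Real.Gamma (u i) :=
      Finset.prod_pos fun i _ => Real.Gamma_pos_of_pos (by linarith [hu i])
    have h2 : (0:ℝ) < Real.Gamma v := Real.Gamma_pos_of_pos (by linarith)
    have h3 : (0:ℝ) < Real.Gamma (∑ i, u i + v) := by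
      refine Real.Gamma_pos_of_pos ?_
      have : (0:ℝ) ≤ ∑ i, u i := Finset.sum_nonneg fun i _ => by linarith [hu i]
      linarith
    positivity
  have hint : (0:ℝ) ≤ ∫ t in Sd d, (1 - ∑ i, t i) ^ (v-1) * ∏ i, (t i) ^ (u i - 1) :=
    setIntegral_nonneg (measurableSet_Sd d) fun t ht => W_nonneg ht
  exact (ENNReal.ofReal_eq_ofReal_iff hint hpos).mp h

lemma moment (d : ℕ) (u : Fin d → ℝ) (v : ℝ) (hu : ∀ i, 1 ≤ u i) (hv : 1 ≤ v)
    (i : Fin d) (k : ℕ) (hk : 1 ≤ k) :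
    ∫ t in Sd d, (t i)^k * ((1 - ∑ j, t j) ^ (v-1) * ∏ j, (t j) ^ (u j - 1)) =
      Real.Gamma (u i + k) * (∏ j ∈ Finset.univ.erase i, Real.Gamma (u j)) * Real.Gamma v /
        Real.Gamma (∑ j, u j + k + v) := by
  classical
  set u2 : Fin d → ℝ := Function.update u i (u i + k) with hu2_def
  have hu2 : ∀ j, 1 ≤ u2 j := by
    intro j
    by_cases h : j = i
    · subst h
      rw [hu2_def, Function.update_self]
      have : (0:ℝ) ≤ (k:ℝ) := Nat.cast_nonneg k
      linarith [hu j]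
    · rw [hu2_def, Function.update_of_ne h]
      exact hu j
  have key := integral_dirichlet d u2 v hu2 hv
  have hsum : ∑ j, u2 j = ∑ j, u j + k := by
    rw [hu2_def, Finset.sum_update_of_mem (Finset.mem_univ i)]
    rw [← Finset.add_sum_erase _ u (Finset.mem_univ i), Finset.erase_eq]
    ring
  have hprod : ∏ j, Real.Gamma (u2 j) =
      Real.Gamma (u i + k) * ∏ j ∈ Finset.univ.erase i, Real.Gamma (u j) := by
    rw [← Finset.mul_prod_erase Finset.univ (fun j => Real.Gamma (u2 j)) (Finset.mem_univ i)]
    congr 1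
    · rw [hu2_def, Function.update_self]
    · exact Finset.prod_congr rfl fun j hj => by
        rw [hu2_def, Function.update_of_ne (Finset.ne_of_mem_erase hj)]
  have hcong : Set.EqOn
      (fun t => (1 - ∑ j, t j) ^ (v-1) * ∏ j, (t j) ^ (u2 j - 1))
      (fun t => (t i)^k * ((1 - ∑ j, t j) ^ (v-1) * ∏ j, (t j) ^ (u j - 1))) (Sd d) := by
    intro t ht
    simp only
    have h1 : ∏ j, (t j) ^ (u2 j - 1) = (t i)^k * ∏ j, (t j) ^ (u j - 1) := by
      rw [← Finset.mul_prod_erase Finset.univ (fun j => (t j) ^ (u2 j - 1)) (Finset.mem_univ i),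
        ← Finset.mul_prod_erase Finset.univ (fun j => (t j) ^ (u j - 1)) (Finset.mem_univ i)]
      have htail : ∏ j ∈ Finset.univ.erase i, (t j) ^ (u2 j - 1) =
          ∏ j ∈ Finset.univ.erase i, (t j) ^ (u j - 1) :=
        Finset.prod_congr rfl fun j hj => by
          rw [hu2_def, Function.update_of_ne (Finset.ne_of_mem_erase hj)]
      have hhead : (t i) ^ (u2 i - 1) = (t i)^k * (t i) ^ (u i - 1) := by
        rw [hu2_def, Function.update_self]
        have h0 : (0:ℝ) ≤ t i := (ht.1 i).1
        have hkr : (0:ℝ) < (k:ℝ) := by exact_mod_cast hk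
        have hne : (k:ℝ) + (u i - 1) ≠ 0 :=
          ne_of_gt (by linarith [hu i] : (0:ℝ) < (k:ℝ) + (u i - 1))
        calc (t i) ^ (u i + (k:ℝ) - 1) = (t i) ^ ((k:ℝ) + (u i - 1)) := by ring_nf
          _ = (t i) ^ (k:ℝ) * (t i) ^ (u i - 1) := Real.rpow_add' h0 hne
          _ = (t i)^k * (t i) ^ (u i - 1) := by rw [Real.rpow_natCast]
      rw [htail, hhead]
      ring
    rw [h1]
    ring
  rw [← setIntegral_congr_fun (measurableSet_Sd d) hcong, key, hsum, hprod]
lemma var_bound (d : ℕ) (hd : 1 ≤ d) {b si α ui : ℝ} (hb : 0 < b) (hs0 : 0 ≤ si) (hs1 : si ≤ 1)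
    (hα : α = 1/b + d + 1) (hui : ui = si/b + 1) :
    ui*(ui+1)/(α*(α+1)) - 2*si*(ui/α) + si^2 ≤ b/4 + (d:ℝ)^2*b^2 := by
  have hd1 : (1:ℝ) ≤ d := by exact_mod_cast hd
  have hα0 : 0 < α := by rw [hα]; positivity
  have hα1 : 0 < α + 1 := by linarith
  have hui0 : 0 < ui := by rw [hui]; positivity
  have hdivb : si/b ≤ 1/b := by gcongr
  have huiα : ui ≤ α := by rw [hα, hui]; linarith
  have hbα : b * α = 1 + ((d:ℝ)+1)*b := by rw [hα]; field_simp; ring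
  have hsplit : ui*(ui+1)/(α*(α+1)) - 2*si*(ui/α) + si^2
      = ui*(α-ui)/(α^2*(α+1)) + (ui/α - si)^2 := by
    field_simp
    ring
  have hvar : ui*(α-ui)/(α^2*(α+1)) ≤ b/4 := by
    have h1 : ui*(α-ui) ≤ α^2/4 := by nlinarith [sq_nonneg (α - 2*ui)]
    have h2 : ui*(α-ui)/(α^2*(α+1)) ≤ (α^2/4)/(α^2*(α+1)) := by gcongr
    have h3 : (α^2/4)/(α^2*(α+1)) = 1/(4*(α+1)) := by
      field_simp
    have h4 : 1/(4*(α+1)) ≤ b/4 := by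
      rw [div_le_div_iff₀ (by positivity) (by norm_num)]
      nlinarith [mul_nonneg hb.le (by linarith : (0:ℝ) ≤ (d:ℝ)+1)]
    calc ui*(α-ui)/(α^2*(α+1)) ≤ (α^2/4)/(α^2*(α+1)) := h2
      _ = 1/(4*(α+1)) := h3
      _ ≤ b/4 := h4
  have hbias : (ui/α - si)^2 ≤ (d:ℝ)^2*b^2 := by
    have hx : ui/α - si = (1 - ((d:ℝ)+1)*si)/α := by
      rw [hui, hα]; field_simp; ring
    have hub : ui/α - si ≤ (d:ℝ)*b := by
      rw [hx, div_le_iff₀ hα0]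
      nlinarith [mul_nonneg (by linarith : (0:ℝ) ≤ (d:ℝ)+1) hs0,
        mul_nonneg (mul_nonneg (by linarith : (0:ℝ) ≤ (d:ℝ)) (by linarith : (0:ℝ) ≤ (d:ℝ)+1)) hb.le]
    have hlb : -((d:ℝ)*b) ≤ ui/α - si := by
      rw [hx, le_div_iff₀ hα0]
      nlinarith [mul_nonneg (by linarith : (0:ℝ) ≤ (d:ℝ)+1) (by linarith : (0:ℝ) ≤ 1 - si),
        mul_nonneg (mul_nonneg (by linarith : (0:ℝ) ≤ (d:ℝ)) (by linarith : (0:ℝ) ≤ (d:ℝ)+1)) hb.le]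
    calc (ui/α - si)^2 ≤ ((d:ℝ)*b)^2 := sq_le_sq' hlb hub
      _ = (d:ℝ)^2*b^2 := by ring
  linarith [hsplit, hvar, hbias]


end DirAux

open DirAux

set_option maxHeartbeats 2000000 in
/-- Eq. (2.12): for small enough `b` (depending only on `d`) and every
`s ∈ S_d`, the mean ℓ¹-deviation of the `Dirichlet(s/b+1,(1-‖s‖₁)/b+1)` distribution from
`s` is at most `d √b`. -/
theorem dirichlet_mean_l1_deviation (d : ℕ) (hd : 1 ≤ d) :
    ∃ b0 : ℝ, 0 < b0 ∧ ∀ b ∈ Set.Ioo (0 : ℝ) b0, ∀ s ∈ Sd d,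
      (∫ t in Sd d, (∑ i, |t i - s i|) * dirKb d b s t) ≤ (d : ℝ) * Real.sqrt b := by
  have hd0 : (0:ℝ) < d := by exact_mod_cast hd
  refine ⟨3/(4*(d:ℝ)^2), by positivity, ?_⟩
  rintro b ⟨hb0, hb1⟩ s hs
  have hbne : b ≠ 0 := hb0.ne'
  obtain ⟨r, hr_def⟩ : ∃ r : ℝ, r = Real.sqrt b := ⟨_, rfl⟩
  have hr0 : 0 < r := hr_def ▸ Real.sqrt_pos.2 hb0
  have hr2 : r^2 = b := hr_def ▸ Real.sq_sqrt hb0.le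
  obtain ⟨u, hu_def⟩ : ∃ u : Fin d → ℝ, u = fun i => s i / b + 1 := ⟨_, rfl⟩
  obtain ⟨v, hv_def⟩ : ∃ v : ℝ, v = (1 - ∑ i, s i)/b + 1 := ⟨_, rfl⟩
  have hs0 : ∀ i, 0 ≤ s i := fun i => (hs.1 i).1
  have hs1 : ∀ i, s i ≤ 1 := fun i => (hs.1 i).2
  have hssum : ∑ i, s i ≤ 1 := hs.2
  have hssum0 : 0 ≤ ∑ i, s i := Finset.sum_nonneg fun i _ => hs0 i
  have hu1 : ∀ i, 1 ≤ u i := fun i => by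
    simp only [hu_def]; nlinarith [div_nonneg (hs0 i) hb0.le]
  have hv1 : 1 ≤ v := by
    simp only [hv_def]; nlinarith [div_nonneg (by linarith : (0:ℝ) ≤ 1 - ∑ i, s i) hb0.le]
  obtain ⟨W, hW_def⟩ : ∃ W : (Fin d → ℝ) → ℝ,
      W = fun t => (1 - ∑ i, t i) ^ (v-1) * ∏ i, (t i) ^ (u i - 1) := ⟨_, rfl⟩
  have hWmeas : Measurable W := by rw [hW_def]; fun_prop
  obtain ⟨α, hα_def⟩ : ∃ α : ℝ, α = ∑ i, u i + v := ⟨_, rfl⟩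
  have hαval : α = 1/b + d + 1 := by
    rw [hα_def, hu_def, hv_def]
    have h1 : ∑ i : Fin d, (s i / b + 1) = (∑ i, s i)/b + d := by
      rw [Finset.sum_add_distrib, ← Finset.sum_div]
      simp [Finset.card_univ]
    rw [h1]
    field_simp
    ring
  have hα0 : 0 < α := by rw [hαval]; positivity
  have hα1 : 0 < α + 1 := by linarith
  have hui0 : ∀ i, 0 < u i := fun i => by linarith [hu1 i]
  have hv0 : 0 < v := by linarith
  have hGu : ∀ i, 0 < Real.Gamma (u i) := fun i => Real.Gamma_pos_of_pos (hui0 i)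
  have hGv : 0 < Real.Gamma v := Real.Gamma_pos_of_pos hv0
  have hGα : 0 < Real.Gamma α := Real.Gamma_pos_of_pos hα0
  have hGP : 0 < ∏ i, Real.Gamma (u i) := Finset.prod_pos fun i _ => hGu i
  obtain ⟨N, hN_def⟩ : ∃ N : ℝ,
      N = Real.Gamma (v + ∑ i, u i) / (Real.Gamma v * ∏ i, Real.Gamma (u i)) := ⟨_, rfl⟩
  have hvs : v + ∑ i, u i = α := by rw [hα_def]; ring
  have hN0 : 0 < N := by rw [hN_def, hvs]; positivity
  have hK : ∀ t ∈ Sd d, dirKb d b s t = N * W t := by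
    intro t ht
    simp only [dirKb, dirK, Set.indicator_of_mem ht, hN_def, hW_def, hu_def, hv_def]
    ring
  -- moments
  have hM0 : N * ∫ t in Sd d, W t = 1 := by
    simp only [hW_def]
    rw [integral_dirichlet d u v hu1 hv1, ← hα_def, hN_def, hvs]
    field_simp <;> ring
  have hProdSplit : ∀ i : Fin d, ∏ j, Real.Gamma (u j) =
      Real.Gamma (u i) * ∏ j ∈ Finset.univ.erase i, Real.Gamma (u j) := fun i =>
    (Finset.mul_prod_erase Finset.univ (fun j => Real.Gamma (u j)) (Finset.mem_univ i)).symm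
  have hGPe : ∀ i : Fin d, 0 < ∏ j ∈ Finset.univ.erase i, Real.Gamma (u j) := fun i =>
    Finset.prod_pos fun j _ => hGu j
  have hm1 : ∀ i : Fin d, N * ∫ t in Sd d, t i * W t = u i / α := by
    intro i
    have h := moment d u v hu1 hv1 i 1 le_rfl
    simp only [pow_one, Nat.cast_one] at h
    have harg : ∑ j, u j + 1 + v = α + 1 := by rw [hα_def]; ring
    rw [harg] at h
    simp only [hW_def]
    rw [h, hN_def, hvs, Real.Gamma_add_one (hui0 i).ne', Real.Gamma_add_one hα0.ne',
      hProdSplit i]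
    have h1 := (hGu i).ne'
    have h2 := (hGPe i).ne'
    field_simp
  have hm2 : ∀ i : Fin d, N * ∫ t in Sd d, (t i)^2 * W t = u i * (u i + 1) / (α * (α + 1)) := by
    intro i
    have h := moment d u v hu1 hv1 i 2 (by norm_num)
    have hc2 : ((2:ℕ):ℝ) = 2 := by norm_num
    rw [hc2] at h
    have harg : ∑ j, u j + 2 + v = (α + 1) + 1 := by rw [hα_def]; ring
    have harg2 : u i + 2 = (u i + 1) + 1 := by ring
    rw [harg, harg2] at h
    simp only [hW_def]
    rw [h, hN_def, hvs,
      Real.Gamma_add_one (ne_of_gt (by linarith [hui0 i] : (0:ℝ) < u i + 1)),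
      Real.Gamma_add_one (ne_of_gt hα1),
      Real.Gamma_add_one (hui0 i).ne', Real.Gamma_add_one hα0.ne', hProdSplit i]
    have h1 := (hGu i).ne'
    have h2 := (hGPe i).ne'
    field_simp
  -- integrability
  have hWint : IntegrableOn W (Sd d) := by rw [hW_def]; exact integrableOn_W u v hu1 hv1
  have hWnn : ∀ t ∈ Sd d, 0 ≤ W t := by
    intro t ht; rw [hW_def]; exact W_nonneg ht
  have habs_le_W : ∀ t ∈ Sd d, |W t| ≤ 1 := by
    intro t ht
    rw [abs_of_nonneg (hWnn t ht), hW_def]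
    exact W_le_one hu1 hv1 ht
  have hbound01 : ∀ (t : Fin d → ℝ), t ∈ Sd d → ∀ i, |t i - s i| ≤ 1 := by
    intro t ht i
    rw [abs_le]
    constructor <;> nlinarith [(ht.1 i).1, (ht.1 i).2, hs0 i, hs1 i]
  have hint1 : ∀ i : Fin d, IntegrableOn (fun t => t i * W t) (Sd d) := by
    intro i
    refine intOn_bounded ((measurable_pi_apply i).mul hWmeas) (M := 1) fun t ht => ?_
    rw [abs_mul]
    calc |t i| * |W t| ≤ 1 * 1 := by
          refine mul_le_mul ?_ (habs_le_W t ht) (abs_nonneg _) (by norm_num)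
          rw [abs_of_nonneg (ht.1 i).1]; exact (ht.1 i).2
      _ = 1 := by norm_num
  have hint2 : ∀ i : Fin d, IntegrableOn (fun t => (t i)^2 * W t) (Sd d) := by
    intro i
    refine intOn_bounded (((measurable_pi_apply i).pow_const 2).mul hWmeas) (M := 1)
      fun t ht => ?_
    rw [abs_mul]
    calc |(t i)^2| * |W t| ≤ 1 * 1 := by
          refine mul_le_mul ?_ (habs_le_W t ht) (abs_nonneg _) (by norm_num)
          rw [abs_of_nonneg (sq_nonneg _), sq_le_one_iff_abs_le_one, abs_of_nonneg (ht.1 i).1]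
          exact (ht.1 i).2
      _ = 1 := by norm_num
  have hintsq : ∀ i : Fin d, IntegrableOn (fun t => (t i - s i)^2 * W t) (Sd d) := by
    intro i
    refine intOn_bounded ((((measurable_pi_apply i).sub measurable_const).pow_const 2).mul
      hWmeas) (M := 1) fun t ht => ?_
    rw [abs_mul]
    calc |(t i - s i)^2| * |W t| ≤ 1 * 1 := by
          refine mul_le_mul ?_ (habs_le_W t ht) (abs_nonneg _) (by norm_num)
          rw [abs_of_nonneg (sq_nonneg _), sq_le_one_iff_abs_le_one]
          exact hbound01 t ht i
      _ = 1 := by norm_num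
  -- second moment bound per coordinate
  have hsq : ∀ i : Fin d, N * ∫ t in Sd d, (t i - s i)^2 * W t ≤ b/4 + (d:ℝ)^2*b^2 := by
    intro i
    have hexp : (fun t : Fin d → ℝ => (t i - s i)^2 * W t) =
        fun t => ((t i)^2 * W t - (2 * s i) * (t i * W t)) + (s i)^2 * W t := by
      funext t; ring
    have hI : ∫ t in Sd d, (t i - s i)^2 * W t =
        (∫ t in Sd d, (t i)^2 * W t) - 2 * s i * (∫ t in Sd d, t i * W t)
          + s i^2 * ∫ t in Sd d, W t := by
      have hsub : IntegrableOn (fun t : Fin d → ℝ => (t i)^2 * W t - 2 * s i * (t i * W t))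
          (Sd d) := (hint2 i).sub ((hint1 i).const_mul _)
      have hcm : IntegrableOn (fun t : Fin d → ℝ => (s i)^2 * W t) (Sd d) :=
        hWint.const_mul _
      have hcm2 : IntegrableOn (fun t : Fin d → ℝ => 2 * s i * (t i * W t)) (Sd d) :=
        (hint1 i).const_mul _
      rw [hexp, integral_add hsub hcm, integral_sub (hint2 i) hcm2,
        integral_const_mul, integral_const_mul]
    have hNI : N * ∫ t in Sd d, (t i - s i)^2 * W t =
        u i * (u i + 1) / (α * (α + 1)) - 2 * s i * (u i / α) + s i^2 := by
      rw [hI]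
      have hring : N * ((∫ t in Sd d, (t i)^2 * W t) - 2 * s i * (∫ t in Sd d, t i * W t)
          + s i^2 * ∫ t in Sd d, W t) =
          (N * ∫ t in Sd d, (t i)^2 * W t) - 2 * s i * (N * ∫ t in Sd d, t i * W t)
          + s i^2 * (N * ∫ t in Sd d, W t) := by ring
      rw [hring, hm2 i, hm1 i, hM0, mul_one]
    rw [hNI]
    exact var_bound d hd hb0 (hs0 i) (hs1 i) hαval (by rw [hu_def])
  -- pointwise bound
  have hpt : ∀ t ∈ Sd d, (∑ i, |t i - s i|) * dirKb d b s t ≤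
      ((d:ℝ) * r / 2 * N) * W t + (N/(2*r)) * ∑ i, (t i - s i)^2 * W t := by
    intro t ht
    rw [hK t ht]
    have hWt : 0 ≤ W t := hWnn t ht
    have habs2 : ∑ i, |t i - s i| ≤ ∑ i, (r/2 + (t i - s i)^2/(2*r)) := by
      refine Finset.sum_le_sum fun i _ => ?_
      have h2 : 2*r*|t i - s i| ≤ r^2 + (t i - s i)^2 := by
        nlinarith [sq_nonneg (|t i - s i| - r), sq_abs (t i - s i)]
      calc |t i - s i| = (2*r*|t i - s i|)/(2*r) := by field_simp
        _ ≤ (r^2 + (t i - s i)^2)/(2*r) := by gcongr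
        _ = r/2 + (t i - s i)^2/(2*r) := by field_simp
    calc (∑ i, |t i - s i|) * (N * W t)
        ≤ (∑ i, (r/2 + (t i - s i)^2/(2*r))) * (N * W t) :=
          mul_le_mul_of_nonneg_right habs2 (mul_nonneg hN0.le hWt)
      _ = ((d:ℝ) * r / 2 * N) * W t + (N/(2*r)) * ∑ i, (t i - s i)^2 * W t := by
          have e1 : ∑ i, (r/2 + (t i - s i)^2/(2*r)) =
              (d:ℝ)*r/2 + (∑ i, (t i - s i)^2)/(2*r) := by
            rw [Finset.sum_add_distrib, Finset.sum_const, Finset.card_univ, Fintype.card_fin,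
              nsmul_eq_mul, ← Finset.sum_div]
            ring
          have e2 : ∑ i, (t i - s i)^2 * W t = (∑ i, (t i - s i)^2) * W t :=
            (Finset.sum_mul _ _ _).symm
          rw [e1, e2]
          field_simp
  -- put it together
  have hcong : ∫ t in Sd d, (∑ i, |t i - s i|) * dirKb d b s t =
      ∫ t in Sd d, (∑ i, |t i - s i|) * (N * W t) :=
    setIntegral_congr_fun (measurableSet_Sd d) (fun t ht => by rw [hK t ht])
  have hsum_meas : Measurable fun t : Fin d → ℝ => ∑ i, |t i - s i| :=
    Finset.measurable_sum _ fun i _ => ((measurable_pi_apply i).sub measurable_const).abs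
  have hLint : IntegrableOn (fun t => (∑ i, |t i - s i|) * (N * W t)) (Sd d) := by
    refine intOn_bounded (hsum_meas.mul (hWmeas.const_mul N)) (M := (d:ℝ) * N) fun t ht => ?_
    have hsnn : 0 ≤ ∑ i, |t i - s i| := Finset.sum_nonneg fun i _ => abs_nonneg _
    rw [abs_mul, abs_of_nonneg hsnn, abs_mul, abs_of_nonneg hN0.le]
    have hsle : ∑ i, |t i - s i| ≤ (d:ℝ) := by
      calc ∑ i, |t i - s i| ≤ ∑ _i : Fin d, (1:ℝ) :=
            Finset.sum_le_sum fun i _ => hbound01 t ht i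
        _ = (d:ℝ) := by simp
    calc (∑ i, |t i - s i|) * (N * |W t|) ≤ (d:ℝ) * (N * 1) := by
          refine mul_le_mul hsle ?_ (mul_nonneg hN0.le (abs_nonneg _)) hd0.le
          exact mul_le_mul_of_nonneg_left (habs_le_W t ht) hN0.le
      _ = (d:ℝ) * N := by ring
  have hUint : IntegrableOn (fun t => ((d:ℝ)*r/2*N) * W t
      + (N/(2*r)) * ∑ i, (t i - s i)^2 * W t) (Sd d) := by
    refine Integrable.add (hWint.const_mul _) ?_
    exact (integrable_finset_sum _ fun i _ => hintsq i).const_mul _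
  have hmono := setIntegral_mono_on hLint hUint (measurableSet_Sd d)
    (fun t ht => by rw [← hK t ht]; exact hpt t ht)
  have hup : ∫ t in Sd d, (((d:ℝ)*r/2*N) * W t + (N/(2*r)) * ∑ i, (t i - s i)^2 * W t)
      = ((d:ℝ)*r/2*N) * (∫ t in Sd d, W t)
        + (N/(2*r)) * ∑ i, ∫ t in Sd d, (t i - s i)^2 * W t := by
    rw [integral_add (hWint.const_mul _)
      ((integrable_finset_sum _ fun i _ => hintsq i).const_mul _),
      integral_const_mul, integral_const_mul, integral_finset_sum _ fun i _ => hintsq i]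
  have hterm1 : ((d:ℝ)*r/2*N) * (∫ t in Sd d, W t) = (d:ℝ)*r/2 := by
    rw [mul_assoc, hM0, mul_one]
  have hsum_le : N * ∑ i, ∫ t in Sd d, (t i - s i)^2 * W t
      ≤ (d:ℝ) * (b/4 + (d:ℝ)^2*b^2) := by
    rw [Finset.mul_sum]
    calc ∑ i, N * ∫ t in Sd d, (t i - s i)^2 * W t
        ≤ ∑ _i : Fin d, (b/4 + (d:ℝ)^2*b^2) := Finset.sum_le_sum fun i _ => hsq i
      _ = (d:ℝ) * (b/4 + (d:ℝ)^2*b^2) := by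
          rw [Finset.sum_const, Finset.card_univ, Fintype.card_fin, nsmul_eq_mul]
  have hterm2 : (N/(2*r)) * ∑ i, ∫ t in Sd d, (t i - s i)^2 * W t
      ≤ (1/(2*r)) * ((d:ℝ) * (b/4 + (d:ℝ)^2*b^2)) := by
    have e : (N/(2*r)) * ∑ i, ∫ t in Sd d, (t i - s i)^2 * W t
        = (1/(2*r)) * (N * ∑ i, ∫ t in Sd d, (t i - s i)^2 * W t) := by ring
    rw [e]
    exact mul_le_mul_of_nonneg_left hsum_le (by positivity)
  have h4 : b * (4*(d:ℝ)^2) < 3 := by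
    have := (lt_div_iff₀ (by positivity : (0:ℝ) < 4*(d:ℝ)^2)).mp hb1
    linarith
  have hnum : (1/(2*r)) * ((d:ℝ)*(b/4 + (d:ℝ)^2*b^2)) ≤ (d:ℝ)*r/2 := by
    rw [div_mul_eq_mul_div, one_mul, div_le_div_iff₀ (by positivity) (by norm_num)]
    nlinarith [hr2, mul_nonneg (mul_nonneg hd0.le hb0.le)
      (by linarith : (0:ℝ) ≤ 3 - b*(4*(d:ℝ)^2))]
  calc ∫ t in Sd d, (∑ i, |t i - s i|) * dirKb d b s t
      = ∫ t in Sd d, (∑ i, |t i - s i|) * (N * W t) := hcong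
    _ ≤ ∫ t in Sd d, (((d:ℝ)*r/2*N) * W t + (N/(2*r)) * ∑ i, (t i - s i)^2 * W t) := hmono
    _ = ((d:ℝ)*r/2*N) * (∫ t in Sd d, W t)
        + (N/(2*r)) * ∑ i, ∫ t in Sd d, (t i - s i)^2 * W t := hup
    _ ≤ (d:ℝ)*r/2 + (1/(2*r)) * ((d:ℝ)*(b/4 + (d:ℝ)^2*b^2)) := by
        rw [hterm1]; linarith [hterm2]
    _ ≤ (d:ℝ)*r/2 + (d:ℝ)*r/2 := by linarith [hnum]
    _ = (d:ℝ) * Real.sqrt b := by rw [← hr_def]; ring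
end
end

section
/- Let d ≥ 1 and fix δ ∈ (0, 3). Define, for b > 0 and s ∈ [1/(4d), 3/(4d)]^d, Q_{b,δ}(s) = (1 − d δ b^{1/2}/(1 − ‖s‖₁))^{(1 − ‖s‖₁)/b} · ∏_{i=1}^d (1 + δ b^{1/2}/s_i)^{s_i/b}. Then, uniformly for s ∈ [1/(4d), 3/(4d)]^d as b → 0, Q_{b,δ}(s) = exp{ −(δ²/2) Σ_{i=1}^d 1/s_i − d²δ²/(2(1 − ‖s‖₁)) + O(b^{1/2}) }; in particular there exist c > 0 and b_0 > 0 depending only on d and δ such that Q_{b,δ}(s) ≥ c for all b ∈ (0, b_0) and all s ∈ [1/(4d), 3/(4d)]^d. -/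
open MeasureTheory Filter Topology
open scoped ENNReal BigOperators

noncomputable section

/-- `Q_{b,δ}(s) = (1 - dδ√b/(1-‖s‖₁))^{(1-‖s‖₁)/b} ∏_i (1 + δ√b/s_i)^{s_i/b}`. -/
def Qbd (d : ℕ) (b δ : ℝ) (s : Fin d → ℝ) : ℝ :=
  (1 - (d : ℝ) * δ * Real.sqrt b / (1 - ∑ i, s i)) ^ ((1 - ∑ i, s i) / b) *
    ∏ i, (1 + δ * Real.sqrt b / s i) ^ (s i / b)

lemma log_quad (x : ℝ) (hx : |x| ≤ 1/2) :
    |Real.log (1 - x) + x + x ^ 2 / 2| ≤ 2 * |x| ^ 3 := by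
  have h1 : |x| < 1 := lt_of_le_of_lt hx (by norm_num)
  have h := Real.abs_log_sub_add_sum_range_le h1 2
  have hsum : (∑ i ∈ Finset.range 2, x ^ (i + 1) / (i + 1)) = x + x ^ 2 / 2 := by
    norm_num [Finset.sum_range_succ]
  rw [hsum] at h
  have hden : (1:ℝ)/2 ≤ 1 - |x| := by linarith
  have h2 : |x| ^ 3 / (1 - |x|) ≤ |x| ^ 3 / (1/2) := by
    apply div_le_div_of_nonneg_left (by positivity) (by linarith) hden
  calc |Real.log (1 - x) + x + x ^ 2 / 2| = |x + x ^ 2 / 2 + Real.log (1 - x)| := by ring_nf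
    _ ≤ |x| ^ (2+1) / (1 - |x|) := h
    _ ≤ |x| ^ 3 / (1/2) := h2
    _ = 2 * |x| ^ 3 := by ring

set_option maxHeartbeats 1000000 in
/-- uniformly for `s ∈ [1/(4d), 3/(4d)]^d` as `b → 0`,
`Q_{b,δ}(s) = exp{-(δ²/2) ∑ 1/s_i - d²δ²/(2(1-‖s‖₁)) + O(√b)}`; in particular `Q_{b,δ}`
is bounded below by a positive constant depending only on `d` and `δ`. -/
theorem Qbd_asymptotics (d : ℕ) (hd : 1 ≤ d) (δ : ℝ) (hδ : δ ∈ Set.Ioo (0 : ℝ) 3) :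
    ∃ C c b0 : ℝ, 0 < C ∧ 0 < c ∧ 0 < b0 ∧ ∀ b ∈ Set.Ioo (0 : ℝ) b0,
      ∀ s : Fin d → ℝ,
        (∀ i, s i ∈ Set.Icc (1 / (4 * (d : ℝ))) (3 / (4 * (d : ℝ)))) →
        |Real.log (Qbd d b δ s) -
            (-(δ ^ 2 / 2) * (∑ i, 1 / s i) -
              (d : ℝ) ^ 2 * δ ^ 2 / (2 * (1 - ∑ i, s i)))| ≤ C * Real.sqrt b ∧
        c ≤ Qbd d b δ s := by
  have hd1 : (1:ℝ) ≤ d := by exact_mod_cast hd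
  have hd0 : (0:ℝ) < d := by linarith
  obtain ⟨hδ0, hδ3⟩ := hδ
  refine ⟨256 * d^4 * δ^3, Real.exp (-(4*d^2*δ^2 + 256 * d^4 * δ^3)),
    min 1 ((1/(8*d*δ))^2), by positivity, Real.exp_pos _, by positivity, ?_⟩
  rintro b ⟨hb0, hbU⟩ s hs
  -- square root facts
  set r : ℝ := Real.sqrt b with hr
  have hsb : r ≤ 1/(8*d*δ) := by
    have h1 : b ≤ (1/(8*d*δ))^2 := le_of_lt (lt_of_lt_of_le hbU (min_le_right _ _))
    calc r ≤ Real.sqrt ((1/(8*d*δ))^2) := Real.sqrt_le_sqrt h1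
      _ = 1/(8*d*δ) := Real.sqrt_sq (by positivity)
  have hsb1 : r ≤ 1 := by
    have h1 : b ≤ 1 := le_of_lt (lt_of_lt_of_le hbU (min_le_left _ _))
    calc r ≤ Real.sqrt 1 := Real.sqrt_le_sqrt h1
      _ = 1 := Real.sqrt_one
  have hsbpos : 0 < r := Real.sqrt_pos.mpr hb0
  have hrb : b = r ^ 2 := by rw [hr, Real.sq_sqrt hb0.le]
  -- bounds on s
  set S := ∑ i, s i with hS
  have hcard : (Finset.univ : Finset (Fin d)).card = d := by simp
  have hS34 : S ≤ 3/4 := by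
    calc S ≤ ∑ _i : Fin d, 3/(4*(d:ℝ)) := Finset.sum_le_sum (fun i _ => (hs i).2)
      _ = d * (3/(4*(d:ℝ))) := by rw [Finset.sum_const, hcard, nsmul_eq_mul]
      _ = 3/4 := by field_simp
  have hS14 : 1/4 ≤ S := by
    calc (1:ℝ)/4 = d * (1/(4*(d:ℝ))) := by field_simp
      _ = ∑ _i : Fin d, 1/(4*(d:ℝ)) := by rw [Finset.sum_const, hcard, nsmul_eq_mul]
      _ ≤ S := Finset.sum_le_sum (fun i _ => (hs i).1)
  have hA4 : 1/4 ≤ 1 - S := by linarith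
  have hA34 : 1 - S ≤ 3/4 := by linarith
  have hApos : 0 < 1 - S := by linarith
  have hsipos : ∀ i, 0 < s i := fun i => lt_of_lt_of_le (by positivity) (hs i).1
  have hds : ∀ i, (1:ℝ) ≤ s i * (4 * d) := fun i =>
    (div_le_iff₀ (by positivity)).mp (hs i).1
  have hsiinv : ∀ i, 1 / s i ≤ 4 * d := by
    intro i
    rw [div_le_iff₀ (hsipos i)]
    nlinarith [hds i]
  -- the two variables
  set x0 : ℝ := (d : ℝ) * δ * r / (1 - S) with hx0
  set y : Fin d → ℝ := fun i => δ * r / s i with hy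
  have hnum0 : (d:ℝ) * δ * r ≤ 1/8 := by
    calc (d:ℝ) * δ * r ≤ d * δ * (1/(8*d*δ)) :=
        mul_le_mul_of_nonneg_left hsb (by positivity)
      _ = 1/8 := by field_simp
  have hnum1 : δ * r ≤ 1/(8*d) := by
    calc δ * r ≤ δ * (1/(8*d*δ)) := mul_le_mul_of_nonneg_left hsb hδ0.le
      _ = 1/(8*d) := by field_simp
  have hx0nonneg : 0 ≤ x0 := by positivity
  have hx0half : x0 ≤ 1/2 := by
    rw [hx0]
    calc (d:ℝ) * δ * r / (1 - S) ≤ (1/8) / (1/4) :=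
      div_le_div₀ (by norm_num) hnum0 (by norm_num) hA4
      _ = 1/2 := by norm_num
  have hynonneg : ∀ i, 0 ≤ y i := fun i => by
    have := hsipos i
    have : (0:ℝ) ≤ δ * r / s i := by positivity
    exact this
  have hyhalf : ∀ i, y i ≤ 1/2 := by
    intro i
    calc y i ≤ (1/(8*(d:ℝ))) / (1/(4*(d:ℝ))) :=
      div_le_div₀ (by positivity) hnum1 (by positivity) (hs i).1
      _ = 1/2 := by field_simp; ring
  have hx0le4 : x0 ≤ 4 * (d * δ * r) := by
    rw [hx0, div_le_iff₀ hApos]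
    nlinarith [mul_nonneg (mul_nonneg (mul_nonneg hd0.le hδ0.le) hsbpos.le)
      (by linarith : (0:ℝ) ≤ 4*(1-S)-1)]
  have hyle : ∀ i, y i ≤ 4 * (d * δ * r) := by
    intro i
    have : y i = δ * r / s i := rfl
    rw [this, div_le_iff₀ (hsipos i)]
    nlinarith [mul_nonneg (mul_nonneg hδ0.le hsbpos.le)
      (by linarith [hds i] : (0:ℝ) ≤ s i * (4*d) - 1)]
  -- positivity of Q
  have hbase0 : (0:ℝ) < 1 - x0 := by linarith
  have hbasei : ∀ i, (0:ℝ) < 1 + y i := fun i => by have := hynonneg i; linarith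
  have hQeq : Qbd d b δ s = (1 - x0) ^ ((1 - S) / b) * ∏ i, (1 + y i) ^ (s i / b) := rfl
  have hprodpos : 0 < ∏ i, (1 + y i) ^ (s i / b) :=
    Finset.prod_pos fun i _ => Real.rpow_pos_of_pos (hbasei i) _
  have hQpos : 0 < Qbd d b δ s := by
    rw [hQeq]
    exact mul_pos (Real.rpow_pos_of_pos hbase0 _) hprodpos
  -- log expansion
  have hlog : Real.log (Qbd d b δ s) =
      (1 - S) / b * Real.log (1 - x0) + ∑ i, s i / b * Real.log (1 + y i) := by
    rw [hQeq, Real.log_mul (ne_of_gt (Real.rpow_pos_of_pos hbase0 _)) (ne_of_gt hprodpos),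
      Real.log_rpow hbase0, Real.log_prod
        (fun i _ => ne_of_gt (Real.rpow_pos_of_pos (hbasei i) _))]
    congr 1
    exact Finset.sum_congr rfl fun i _ => Real.log_rpow (hbasei i) _
  -- error terms
  set E0 : ℝ := Real.log (1 - x0) + x0 + x0 ^ 2 / 2 with hE0def
  set E : Fin d → ℝ := fun i => Real.log (1 + y i) - y i + (y i) ^ 2 / 2 with hEdef
  have habs0 : |E0| ≤ 2 * x0 ^ 3 := by
    have h := log_quad x0 (by rw [abs_of_nonneg hx0nonneg]; exact hx0half)
    rwa [abs_of_nonneg hx0nonneg] at h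
  have habsi : ∀ i, |E i| ≤ 2 * (y i) ^ 3 := by
    intro i
    have h := log_quad (-(y i)) (by rw [abs_neg, abs_of_nonneg (hynonneg i)]; exact hyhalf i)
    rw [abs_neg, abs_of_nonneg (hynonneg i)] at h
    have heq : Real.log (1 - -(y i)) + -(y i) + (-(y i)) ^ 2 / 2 = E i := by
      have : E i = Real.log (1 + y i) - y i + (y i) ^ 2 / 2 := rfl
      rw [this, sub_neg_eq_add]; ring
    rwa [heq] at h
  -- key algebraic identity
  set T : ℝ := -(δ ^ 2 / 2) * (∑ i, 1 / s i) - (d : ℝ) ^ 2 * δ ^ 2 / (2 * (1 - S)) with hT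
  have hid : Real.log (Qbd d b δ s) - T = (1 - S) / b * E0 + ∑ i, s i / b * E i := by
    rw [hlog, hE0def, hEdef, hT]
    have h1 : (1 - S) / b * (x0 + x0 ^ 2 / 2) =
        d * δ / r + (d:ℝ) ^ 2 * δ ^ 2 / (2 * (1 - S)) := by
      rw [hx0, hrb]
      field_simp
    have h2 : ∀ i, s i / b * (y i - (y i) ^ 2 / 2) = δ / r - δ ^ 2 / (2 * s i) := by
      intro i
      have hyi : y i = δ * r / s i := rfl
      have hsne := (hsipos i).ne'
      rw [hyi, hrb]
      field_simp
    have h4 : (∑ i, s i / b * (y i - (y i) ^ 2 / 2)) =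
        d * (δ / r) - (δ ^ 2 / 2) * (∑ i, 1 / s i) := by
      rw [Finset.sum_congr rfl fun i _ => h2 i, Finset.sum_sub_distrib,
        Finset.sum_const, hcard, nsmul_eq_mul]
      congr 1
      rw [Finset.mul_sum]
      exact Finset.sum_congr rfl fun i _ => by rw [mul_one_div]; ring_nf
    have h3 : (∑ i, s i / b * (Real.log (1 + y i) - y i + (y i) ^ 2 / 2)) =
        (∑ i, s i / b * Real.log (1 + y i)) - (∑ i, s i / b * (y i - (y i) ^ 2 / 2)) := by
      rw [← Finset.sum_sub_distrib]
      exact Finset.sum_congr rfl fun i _ => by ring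
    rw [h3, h4]
    have hexp : (1 - S) / b * Real.log (1 - x0) =
        (1 - S) / b * (Real.log (1 - x0) + x0 + x0 ^ 2 / 2) - (1 - S) / b * (x0 + x0 ^ 2 / 2) := by
      ring
    rw [hexp, h1]
    ring
  -- error bound
  have hcube : r ^ 3 = b * r := by rw [hrb]; ring
  have hterm : ∀ z : ℝ, 0 ≤ z → z ≤ 4 * (d * δ * r) →
      2 * z ^ 3 ≤ 128 * d ^ 3 * δ ^ 3 * (b * r) := by
    intro z hz0 hzle
    have h := pow_le_pow_left₀ hz0 hzle 3
    calc 2 * z ^ 3 ≤ 2 * (4 * (d * δ * r)) ^ 3 := by linarith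
      _ = 128 * d ^ 3 * δ ^ 3 * r ^ 3 := by ring
      _ = 128 * d ^ 3 * δ ^ 3 * (b * r) := by rw [hcube]
  have hbound0 : (1 - S) / b * |E0| ≤ 128 * d ^ 3 * δ ^ 3 * r := by
    have h1 : |E0| ≤ 128 * d ^ 3 * δ ^ 3 * (b * r) :=
      le_trans habs0 (hterm x0 hx0nonneg hx0le4)
    calc (1 - S) / b * |E0| ≤ 1 / b * (128 * d ^ 3 * δ ^ 3 * (b * r)) := by
          apply mul_le_mul _ h1 (abs_nonneg _) (by positivity)
          apply div_le_div₀ zero_le_one (by linarith) hb0 le_rfl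
      _ = 128 * d ^ 3 * δ ^ 3 * r := by field_simp
  have hboundi : ∀ i, s i / b * |E i| ≤ 128 * d ^ 3 * δ ^ 3 * r := by
    intro i
    have hsile1 : s i ≤ 1 := by
      have h34 : 3/(4*(d:ℝ)) ≤ 1 := by
        rw [div_le_one (by positivity)]; linarith
      linarith [(hs i).2]
    have h1 : |E i| ≤ 128 * d ^ 3 * δ ^ 3 * (b * r) :=
      le_trans (habsi i) (hterm (y i) (hynonneg i) (hyle i))
    calc s i / b * |E i| ≤ 1 / b * (128 * d ^ 3 * δ ^ 3 * (b * r)) := by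
          apply mul_le_mul _ h1 (abs_nonneg _) (by positivity)
          apply div_le_div₀ zero_le_one hsile1 hb0 le_rfl
      _ = 128 * d ^ 3 * δ ^ 3 * r := by field_simp
  have hmain : |Real.log (Qbd d b δ s) - T| ≤ 256 * d ^ 4 * δ ^ 3 * r := by
    rw [hid]
    calc |(1 - S) / b * E0 + ∑ i, s i / b * E i|
        ≤ |(1 - S) / b * E0| + |∑ i, s i / b * E i| := abs_add_le _ _
      _ ≤ (1 - S) / b * |E0| + ∑ i, s i / b * |E i| := by
          apply add_le_add
          · rw [abs_mul, abs_of_nonneg (show (0:ℝ) ≤ (1 - S)/b by positivity)]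
          · refine le_trans (Finset.abs_sum_le_sum_abs _ _) (le_of_eq ?_)
            refine Finset.sum_congr rfl fun i _ => ?_
            rw [abs_mul, abs_of_nonneg (show (0:ℝ) ≤ s i / b from by
              have := (hsipos i); positivity)]
      _ ≤ 128 * d ^ 3 * δ ^ 3 * r + ∑ _i : Fin d, 128 * d ^ 3 * δ ^ 3 * r :=
          add_le_add hbound0 (Finset.sum_le_sum fun i _ => hboundi i)
      _ = 128 * d ^ 3 * δ ^ 3 * r + d * (128 * d ^ 3 * δ ^ 3 * r) := by
          rw [Finset.sum_const, hcard, nsmul_eq_mul]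
      _ ≤ 256 * d ^ 4 * δ ^ 3 * r := by
          have key : (0:ℝ) ≤ ((d:ℝ) - 1) * (d^3 * δ^3 * r) :=
            mul_nonneg (by linarith) (by positivity)
          nlinarith [key]
  refine ⟨hmain, ?_⟩
  -- lower bound on T
  have hsumle : (∑ i, 1 / s i) ≤ 4 * d ^ 2 := by
    calc (∑ i, 1 / s i) ≤ ∑ _i : Fin d, 4 * (d:ℝ) := Finset.sum_le_sum fun i _ => hsiinv i
      _ = d * (4 * d) := by rw [Finset.sum_const, hcard, nsmul_eq_mul]
      _ = 4 * d ^ 2 := by ring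
  have hsumnn : (0:ℝ) ≤ ∑ i, 1 / s i :=
    Finset.sum_nonneg fun i _ => by have := hsipos i; positivity
  have hTlb : -(4 * d ^ 2 * δ ^ 2) ≤ T := by
    rw [hT]
    have h1 : (δ ^ 2 / 2) * (∑ i, 1 / s i) ≤ 2 * d ^ 2 * δ ^ 2 := by
      have key : (0:ℝ) ≤ (δ^2/2) * (4 * d^2 - ∑ i, 1 / s i) :=
        mul_nonneg (by positivity) (by linarith)
      nlinarith [key]
    have h2 : (d:ℝ) ^ 2 * δ ^ 2 / (2 * (1 - S)) ≤ 2 * d ^ 2 * δ ^ 2 := by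
      rw [div_le_iff₀ (by linarith)]
      have key2 : (0:ℝ) ≤ (4*(1-S) - 1) * ((d:ℝ)^2 * δ^2) :=
        mul_nonneg (by linarith) (by positivity)
      nlinarith [key2]
    linarith [h1, h2]
  have hlogQ : -(4 * d ^ 2 * δ ^ 2 + 256 * d ^ 4 * δ ^ 3) ≤ Real.log (Qbd d b δ s) := by
    have h1 : -(256 * d ^ 4 * δ ^ 3 * r) ≤ Real.log (Qbd d b δ s) - T :=
      neg_le_of_abs_le hmain
    have h2 : 256 * d ^ 4 * δ ^ 3 * r ≤ 256 * d ^ 4 * δ ^ 3 := by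
      nlinarith [mul_nonneg (by positivity : (0:ℝ) ≤ 256*(d:ℝ)^4*δ^3) (by linarith : (0:ℝ) ≤ 1 - r)]
    linarith
  calc Real.exp (-(4 * d ^ 2 * δ ^ 2 + 256 * d ^ 4 * δ ^ 3))
      ≤ Real.exp (Real.log (Qbd d b δ s)) := Real.exp_le_exp.mpr hlogQ
    _ = Qbd d b δ s := Real.exp_log hQpos
end
end
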